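/- arXiv:2409.18348 — 4 statements merged into one kernel-verified Lean document; each statement's English description precedes it below -/
import Mathlib

section
/- Let f be a tropical polynomial in n variables and g a tropical polynomial in n variables with g ≠ −∞, and let φ = f ⊘ g. Let F be the tropical polynomial in n+1 variables defined by F(x, t) = max(f(x), t + g(x)) (i.e. F = f ⊕ (x_{n+1} ⊙ g)). Then V(F) equals the union of the three sets {(x, φ(x)) ∈ ℝ^{n+1} : x ∈ ℝⁿ, φ(x) ≠ −∞}, {(x, t) ∈ ℝ^{n+1} : x ∈ V(f), t < φ(x)}, and {(x, t) ∈ ℝ^{n+1} : x ∈ V(g), t > φ(x)}. -/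
open scoped Pointwise
open MeasureTheory

/-- A tropical (Laurent) polynomial in `n` variables: a finite support of integer
exponent vectors together with real coefficients. -/
structure TropPoly (n : ℕ) where
  support : Finset (Fin n → ℤ)
  coeff : (Fin n → ℤ) → ℝ

namespace TropPoly

variable {n : ℕ}

/-- The affine term `c_i + ⟨i, x⟩` of a tropical polynomial. -/
noncomputable def term (f : TropPoly n) (i : Fin n → ℤ) (x : Fin n → ℝ) : ℝ :=
  f.coeff i + ∑ j, (i j : ℝ) * x j

/-- Evaluation of a tropical polynomial, with value `⊥ = -∞` when the support is empty. -/
noncomputable def eval (f : TropPoly n) (x : Fin n → ℝ) : EReal :=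
  f.support.sup fun i => ((f.term i x : ℝ) : EReal)

/-- The tropical hypersurface `V(f)`: points where the maximum is attained at least twice
(all of `ℝⁿ` when `f = -∞`). -/
def V (f : TropPoly n) : Set (Fin n → ℝ) :=
  {x | f.support = ∅ ∨ ∃ i ∈ f.support, ∃ j ∈ f.support, i ≠ j ∧
    f.eval x = (f.term i x : EReal) ∧ f.eval x = (f.term j x : EReal)}

/-- The tropical quotient `f ⊘ g` as an `EReal`-valued function. -/
noncomputable def tropDiv (f g : TropPoly n) (x : Fin n → ℝ) : EReal :=
  f.eval x - g.eval x

/-- Real realization of an integer exponent vector. -/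
def expR {m : ℕ} : (Fin m → ℤ) → (Fin m → ℝ) := fun i j => (i j : ℝ)

/-- The Newton polytope of a tropical polynomial. -/
noncomputable def Newt (f : TropPoly n) : Set (Fin n → ℝ) :=
  convexHull ℝ (expR '' (f.support : Set (Fin n → ℤ)))

/-- The polytope `conv(Newt(f) × {0} ∪ Newt(g) × {1}) ⊂ ℝ^{n+1}`, which is the Newton
polytope of `f ⊕ (x_{n+1} ⊙ g)`. -/
noncomputable def pairPolytope (f g : TropPoly n) : Set (Fin (n + 1) → ℝ) :=
  convexHull ℝ
    ((fun v : Fin n → ℝ => Fin.snoc v (0 : ℝ)) '' f.Newt ∪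
     (fun v : Fin n → ℝ => Fin.snoc v (1 : ℝ)) '' g.Newt)

open Classical in
/-- The volume of a pair of tropical polynomials: the `(n+1)`-dimensional Lebesgue measure
of `conv(Newt(f) × {0} ∪ Newt(g) × {1})` if it is full-dimensional, `0` otherwise. -/
noncomputable def vol (f g : TropPoly n) : ℝ :=
  if affineSpan ℝ (pairPolytope f g) = ⊤ then (volume (pairPolytope f g)).toReal else 0

open Classical in
/-- Monomial complexity: the number of linear regions of `f`. -/
noncomputable def mComp (f : TropPoly n) : ℕ :=
  (f.support.filter fun i =>
    (interior {x : Fin n → ℝ | f.eval x = (f.term i x : EReal)}).Nonempty).card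

/-- Factorization complexity of a factorization `f = f₁ ⊙ ⋯ ⊙ f_m`. -/
noncomputable def fComp (l : List (TropPoly n)) : ℤ :=
  (l.map fun h => (mComp h : ℤ)).sum - ((l.length : ℤ) - 1)

/-- A tropical polynomial is a unit (tropical monomial) if, as a function, it is
integer affine: `x ↦ a + ⟨k, x⟩`. -/
def IsUnit (g : TropPoly n) : Prop :=
  ∃ (a : ℝ) (k : Fin n → ℤ), ∀ x, g.eval x = ((a + ∑ j, (k j : ℝ) * x j : ℝ) : EReal)

/-- A tropical polynomial is irreducible if in any pointwise factorization
`f = g ⊙ h` one of the factors is a unit. -/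
def IsIrreducible (f : TropPoly n) : Prop :=
  ∀ g h : TropPoly n, (∀ x, f.eval x = g.eval x + h.eval x) → g.IsUnit ∨ h.IsUnit

/-- The tropical polynomial `f ⊕ (x_{n+1} ⊙ g)` in `n+1` variables, whose value at
`(x, t)` is `max (f x) (t + g x)`. -/
noncomputable def oplusShift (f g : TropPoly n) : TropPoly (n + 1) where
  support :=
    f.support.image (fun i => Fin.snoc i (0 : ℤ)) ∪
    g.support.image (fun i => Fin.snoc i (1 : ℤ))
  coeff := fun j =>
    if j (Fin.last n) = 0 then f.coeff (fun k => j k.castSucc)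
    else g.coeff (fun k => j k.castSucc)

open Classical in
/-- The tropical product `f ⊙ g`: supports add (Minkowski sum) and the coefficient of `k`
is the maximum of `f.coeff i + g.coeff j` over decompositions `k = i + j`. -/
noncomputable def tmul (f g : TropPoly n) : TropPoly n where
  support := f.support + g.support
  coeff := fun k =>
    WithBot.unbotD 0
      (((f.support ×ˢ g.support).filter fun p => p.1 + p.2 = k).sup
        fun p => ((f.coeff p.1 + g.coeff p.2 : ℝ) : WithBot ℝ))

end TropPoly

namespace TropPoly
variable {n : ℕ}

lemma snoc_injective (c : ℤ) :
    Function.Injective (fun i : Fin n → ℤ => (Fin.snoc i c : Fin (n+1) → ℤ)) := by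
  intro i j h
  funext k
  have := congrFun h k.castSucc
  simpa using this

lemma snoc_zero_ne_snoc_one (i j : Fin n → ℤ) :
    (Fin.snoc i (0:ℤ) : Fin (n+1) → ℤ) ≠ Fin.snoc j 1 := by
  intro h
  have := congrFun h (Fin.last n)
  simp at this

lemma term_snoc_zero (f g : TropPoly n) (i : Fin n → ℤ) (p : Fin (n+1) → ℝ) :
    (oplusShift f g).term (Fin.snoc i (0:ℤ)) p = f.term i (Fin.init p) := by
  simp [term, oplusShift, Fin.sum_univ_castSucc, Fin.init]

lemma term_snoc_one (f g : TropPoly n) (j : Fin n → ℤ) (p : Fin (n+1) → ℝ) :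
    (oplusShift f g).term (Fin.snoc j (1:ℤ)) p = p (Fin.last n) + g.term j (Fin.init p) := by
  simp [term, oplusShift, Fin.sum_univ_castSucc, Fin.init]
  ring

lemma mem_oplusShift_support {f g : TropPoly n} {a : Fin (n+1) → ℤ} :
    a ∈ (oplusShift f g).support ↔
      (∃ i ∈ f.support, a = Fin.snoc i 0) ∨ (∃ j ∈ g.support, a = Fin.snoc j 1) := by
  simp [oplusShift, eq_comm]

end TropPoly

/-- **Duality theorem for tropical rational functions.**
For tropical polynomials `f` and `g ≠ -∞` with `φ = f ⊘ g`, the tropical hypersurface of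
`F = f ⊕ (x_{n+1} ⊙ g)` is the union of the graph of `φ` (where finite), the part of the
cylinder over `V(f)` strictly below the graph, and the part of the cylinder over `V(g)`
strictly above the graph. -/
theorem duality_for_tropical_rational_functions {n : ℕ} (f g : TropPoly n)
    (hg : g.support.Nonempty) :
    (TropPoly.oplusShift f g).V =
      {p : Fin (n + 1) → ℝ |
        TropPoly.tropDiv f g (Fin.init p) ≠ ⊥ ∧
        (p (Fin.last n) : EReal) = TropPoly.tropDiv f g (Fin.init p)} ∪
      {p : Fin (n + 1) → ℝ |
        Fin.init p ∈ f.V ∧ (p (Fin.last n) : EReal) < TropPoly.tropDiv f g (Fin.init p)} ∪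
      {p : Fin (n + 1) → ℝ |
        Fin.init p ∈ g.V ∧ TropPoly.tropDiv f g (Fin.init p) < (p (Fin.last n) : EReal)} := by
    classical
  ext p
  simp only [TropPoly.V, Set.mem_union, Set.mem_setOf_eq]
  set F := TropPoly.oplusShift f g with hF
  set x := Fin.init p with hx
  set t := p (Fin.last n) with ht
  obtain ⟨j0, hj0, hgj0⟩ := Finset.exists_mem_eq_sup g.support hg
    (fun i => ((g.term i x : ℝ) : EReal))
  set rg := g.term j0 x with hrg
  have hgeval : g.eval x = (rg : EReal) := hgj0
  have hgle : ∀ j ∈ g.support, g.term j x ≤ rg := by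
    intro j hj
    have h1 : ((g.term j x : ℝ) : EReal) ≤ g.eval x :=
      Finset.le_sup (f := fun i => ((g.term i x : ℝ) : EReal)) hj
    rw [hgeval] at h1
    exact EReal.coe_le_coe_iff.1 h1
  have hFj0 : (Fin.snoc j0 (1:ℤ) : Fin (n+1) → ℤ) ∈ F.support :=
    TropPoly.mem_oplusShift_support.2 (Or.inr ⟨j0, hj0, rfl⟩)
  have hFne : F.support ≠ ∅ := Finset.ne_empty_of_mem hFj0
  obtain ⟨a0, ha0, hFev⟩ := Finset.exists_mem_eq_sup F.support ⟨_, hFj0⟩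
    (fun a => ((F.term a p : ℝ) : EReal))
  have hFeval' : F.eval p = ((F.term a0 p : ℝ) : EReal) := hFev
  have hterm0 : ∀ i, F.term (Fin.snoc i (0:ℤ)) p = f.term i x :=
    fun i => TropPoly.term_snoc_zero f g i p
  have hterm1 : ∀ j, F.term (Fin.snoc j (1:ℤ)) p = t + g.term j x :=
    fun j => TropPoly.term_snoc_one f g j p
  have hle_f : ∀ i ∈ f.support, ((f.term i x : ℝ) : EReal) ≤ F.eval p := by
    intro i hi
    have hm : (Fin.snoc i (0:ℤ) : Fin (n+1) → ℤ) ∈ F.support :=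
      TropPoly.mem_oplusShift_support.2 (Or.inl ⟨i, hi, rfl⟩)
    have h2 : ((F.term (Fin.snoc i (0:ℤ)) p : ℝ) : EReal) ≤ F.eval p :=
      Finset.le_sup (f := fun a => ((F.term a p : ℝ) : EReal)) hm
    rwa [hterm0] at h2
  have hle_g : ∀ j ∈ g.support, ((t + g.term j x : ℝ) : EReal) ≤ F.eval p := by
    intro j hj
    have hm : (Fin.snoc j (1:ℤ) : Fin (n+1) → ℤ) ∈ F.support :=
      TropPoly.mem_oplusShift_support.2 (Or.inr ⟨j, hj, rfl⟩)
    have h2 : ((F.term (Fin.snoc j (1:ℤ)) p : ℝ) : EReal) ≤ F.eval p :=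
      Finset.le_sup (f := fun a => ((F.term a p : ℝ) : EReal)) hm
    rwa [hterm1] at h2
  by_cases hf : f.support = ∅
  · -- Case A : f = -∞
    have hfeval : f.eval x = ⊥ := by simp [TropPoly.eval, hf]
    have hdiv : TropPoly.tropDiv f g x = ⊥ := by
      rw [TropPoly.tropDiv, hfeval, hgeval]; exact EReal.bot_sub _
    have hFe : F.eval p = ((t + rg : ℝ) : EReal) := by
      refine le_antisymm ?_ (hle_g j0 hj0)
      rw [hFeval']
      rcases TropPoly.mem_oplusShift_support.1 ha0 with ⟨i, hi, rfl⟩ | ⟨j, hj, rfl⟩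
      · exact absurd hi (by simp [hf])
      · rw [hterm1]
        exact EReal.coe_le_coe_iff.2 (by have := hgle j hj; linarith)
    rw [hdiv]
    constructor
    · rintro (hemp | ⟨a, ha, b, hb, hab, hea, heb⟩)
      · exact absurd hemp hFne
      refine Or.inr ⟨?_, EReal.bot_lt_coe t⟩
      rcases TropPoly.mem_oplusShift_support.1 ha with ⟨i, hi, rfl⟩ | ⟨ja, hja, rfl⟩
      · exact absurd hi (by simp [hf])
      rcases TropPoly.mem_oplusShift_support.1 hb with ⟨i, hi, rfl⟩ | ⟨jb, hjb, rfl⟩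
      · exact absurd hi (by simp [hf])
      rw [hterm1, hFe] at hea heb
      have h1 : t + rg = t + g.term ja x := EReal.coe_eq_coe_iff.1 hea
      have h2 : t + rg = t + g.term jb x := EReal.coe_eq_coe_iff.1 heb
      refine Or.inr ⟨ja, hja, jb, hjb, fun h => hab (by rw [h]), ?_, ?_⟩
      · rw [hgeval]; norm_cast; linarith
      · rw [hgeval]; norm_cast; linarith
    · rintro ((⟨hne, -⟩ | ⟨-, hlt⟩) | ⟨hVg, -⟩)
      · exact absurd rfl hne
      · exact absurd hlt (not_lt_bot)
      rcases hVg with hemp | ⟨i, hi, j, hj, hij, h1, h2⟩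
      · exact absurd hemp hg.ne_empty
      rw [hgeval] at h1 h2
      have h1' : rg = g.term i x := EReal.coe_eq_coe_iff.1 h1
      have h2' : rg = g.term j x := EReal.coe_eq_coe_iff.1 h2
      refine Or.inr ⟨_, TropPoly.mem_oplusShift_support.2 (Or.inr ⟨i, hi, rfl⟩),
        _, TropPoly.mem_oplusShift_support.2 (Or.inr ⟨j, hj, rfl⟩),
        fun h => hij (TropPoly.snoc_injective 1 h), ?_, ?_⟩
      · rw [hterm1, hFe]; norm_cast; linarith
      · rw [hterm1, hFe]; norm_cast; linarith
  · -- Case B : f ≠ -∞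
    have hfne : f.support.Nonempty := Finset.nonempty_of_ne_empty hf
    obtain ⟨i0, hi0, hfj0⟩ := Finset.exists_mem_eq_sup f.support hfne
      (fun i => ((f.term i x : ℝ) : EReal))
    set rf := f.term i0 x with hrf
    have hfeval : f.eval x = (rf : EReal) := hfj0
    have hfle : ∀ i ∈ f.support, f.term i x ≤ rf := by
      intro i hi
      have h1 : ((f.term i x : ℝ) : EReal) ≤ f.eval x :=
        Finset.le_sup (f := fun k => ((f.term k x : ℝ) : EReal)) hi
      rw [hfeval] at h1
      exact EReal.coe_le_coe_iff.1 h1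
    have hdiv : TropPoly.tropDiv f g x = ((rf - rg : ℝ) : EReal) := by
      rw [TropPoly.tropDiv, hfeval, hgeval, ← EReal.coe_sub]
    rw [hdiv]
    rcases lt_trichotomy t (rf - rg) with hlt | heq | hgt
    · -- below the graph
      have hFe : F.eval p = (rf : EReal) := by
        refine le_antisymm ?_ (hle_f i0 hi0)
        rw [hFeval']
        rcases TropPoly.mem_oplusShift_support.1 ha0 with ⟨i, hi, rfl⟩ | ⟨j, hj, rfl⟩
        · rw [hterm0]; exact EReal.coe_le_coe_iff.2 (hfle i hi)
        · rw [hterm1]; exact EReal.coe_le_coe_iff.2 (by have := hgle j hj; linarith)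
      constructor
      · rintro (hemp | ⟨a, ha, b, hb, hab, hea, heb⟩)
        · exact absurd hemp hFne
        refine Or.inl (Or.inr ⟨?_, EReal.coe_lt_coe_iff.2 hlt⟩)
        have key : ∀ c ∈ F.support, F.eval p = ((F.term c p : ℝ) : EReal) →
            ∃ i ∈ f.support, c = Fin.snoc i 0 ∧ f.eval x = ((f.term i x : ℝ) : EReal) := by
          intro c hc hec
          rcases TropPoly.mem_oplusShift_support.1 hc with ⟨i, hi, rfl⟩ | ⟨j, hj, rfl⟩
          · refine ⟨i, hi, rfl, ?_⟩
            rw [hterm0, hFe] at hec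
            rw [hfeval]; exact hec
          · exfalso
            rw [hterm1, hFe] at hec
            have h2 : rf = t + g.term j x := EReal.coe_eq_coe_iff.1 hec
            have := hgle j hj; linarith
        obtain ⟨ia, hia, rfl, h1⟩ := key a ha hea
        obtain ⟨ib, hib, rfl, h2⟩ := key b hb heb
        exact Or.inr ⟨ia, hia, ib, hib, fun h => hab (by rw [h]), h1, h2⟩
      · rintro ((⟨-, hteq⟩ | ⟨hVf, -⟩) | ⟨-, hlt'⟩)
        · exact absurd (EReal.coe_eq_coe_iff.1 hteq) (ne_of_lt hlt)
        · rcases hVf with hemp | ⟨i, hi, j, hj, hij, h1, h2⟩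
          · exact absurd hemp hf
          rw [hfeval] at h1 h2
          refine Or.inr ⟨_, TropPoly.mem_oplusShift_support.2 (Or.inl ⟨i, hi, rfl⟩),
            _, TropPoly.mem_oplusShift_support.2 (Or.inl ⟨j, hj, rfl⟩),
            fun h => hij (TropPoly.snoc_injective 0 h), ?_, ?_⟩
          · rw [hterm0, hFe]; exact h1
          · rw [hterm0, hFe]; exact h2
        · exact absurd (EReal.coe_lt_coe_iff.1 hlt') (by linarith)
    · -- on the graph: both sides hold
      have htg : t + rg = rf := by linarith
      have hFe : F.eval p = (rf : EReal) := by
        refine le_antisymm ?_ (hle_f i0 hi0)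
        rw [hFeval']
        rcases TropPoly.mem_oplusShift_support.1 ha0 with ⟨i, hi, rfl⟩ | ⟨j, hj, rfl⟩
        · rw [hterm0]; exact EReal.coe_le_coe_iff.2 (hfle i hi)
        · rw [hterm1]; exact EReal.coe_le_coe_iff.2 (by have := hgle j hj; linarith)
      constructor
      · intro _
        exact Or.inl (Or.inl ⟨EReal.coe_ne_bot _, EReal.coe_eq_coe_iff.2 heq⟩)
      · intro _
        refine Or.inr ⟨_, TropPoly.mem_oplusShift_support.2 (Or.inl ⟨i0, hi0, rfl⟩),
          _, TropPoly.mem_oplusShift_support.2 (Or.inr ⟨j0, hj0, rfl⟩),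
          TropPoly.snoc_zero_ne_snoc_one i0 j0, ?_, ?_⟩
        · rw [hterm0, hFe]
        · rw [hterm1, hFe]; norm_cast; linarith
    · -- above the graph
      have hFe : F.eval p = ((t + rg : ℝ) : EReal) := by
        refine le_antisymm ?_ (hle_g j0 hj0)
        rw [hFeval']
        rcases TropPoly.mem_oplusShift_support.1 ha0 with ⟨i, hi, rfl⟩ | ⟨j, hj, rfl⟩
        · rw [hterm0]; exact EReal.coe_le_coe_iff.2 (by have := hfle i hi; linarith)
        · rw [hterm1]; exact EReal.coe_le_coe_iff.2 (by have := hgle j hj; linarith)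
      constructor
      · rintro (hemp | ⟨a, ha, b, hb, hab, hea, heb⟩)
        · exact absurd hemp hFne
        refine Or.inr ⟨?_, EReal.coe_lt_coe_iff.2 hgt⟩
        have key : ∀ c ∈ F.support, F.eval p = ((F.term c p : ℝ) : EReal) →
            ∃ j ∈ g.support, c = Fin.snoc j 1 ∧ g.eval x = ((g.term j x : ℝ) : EReal) := by
          intro c hc hec
          rcases TropPoly.mem_oplusShift_support.1 hc with ⟨i, hi, rfl⟩ | ⟨j, hj, rfl⟩
          · exfalso
            rw [hterm0, hFe] at hec
            have h2 : t + rg = f.term i x := EReal.coe_eq_coe_iff.1 hec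
            have := hfle i hi; linarith
          · refine ⟨j, hj, rfl, ?_⟩
            rw [hterm1, hFe] at hec
            have h2 : t + rg = t + g.term j x := EReal.coe_eq_coe_iff.1 hec
            rw [hgeval]; norm_cast; linarith
        obtain ⟨ja, hja, rfl, h1⟩ := key a ha hea
        obtain ⟨jb, hjb, rfl, h2⟩ := key b hb heb
        exact Or.inr ⟨ja, hja, jb, hjb, fun h => hab (by rw [h]), h1, h2⟩
      · rintro ((⟨-, hteq⟩ | ⟨-, hlt'⟩) | ⟨hVg, -⟩)
        · exact absurd (EReal.coe_eq_coe_iff.1 hteq) (ne_of_gt hgt)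
        · exact absurd (EReal.coe_lt_coe_iff.1 hlt') (by linarith)
        rcases hVg with hemp | ⟨i, hi, j, hj, hij, h1, h2⟩
        · exact absurd hemp hg.ne_empty
        rw [hgeval] at h1 h2
        have h1' : rg = g.term i x := EReal.coe_eq_coe_iff.1 h1
        have h2' : rg = g.term j x := EReal.coe_eq_coe_iff.1 h2
        refine Or.inr ⟨_, TropPoly.mem_oplusShift_support.2 (Or.inr ⟨i, hi, rfl⟩),
          _, TropPoly.mem_oplusShift_support.2 (Or.inr ⟨j, hj, rfl⟩),
          fun h => hij (TropPoly.snoc_injective 1 h), ?_, ?_⟩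
        · rw [hterm1, hFe]; norm_cast; linarith
        · rw [hterm1, hFe]; norm_cast; linarith
end

section
/- Let φ : ℝ → ℝ be a tropical rational function in one variable that is not identically −∞, i.e. φ = f₀ ⊘ g₀ for some one-variable tropical polynomials f₀ ≠ −∞ and g₀ ≠ −∞. Then there exist one-variable tropical polynomials f ≠ −∞ and g ≠ −∞ with φ = f ⊘ g such that for every pair of one-variable tropical polynomials (f', g') with g' ≠ −∞ and φ = f' ⊘ g', one has vol(f, g) ≤ vol(f', g'). -/
open scoped Pointwise
open MeasureTheory

namespace TropAux
open TropPoly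

lemma fin1_ext {α : Type*} {x y : Fin 1 → α} (h : x 0 = y 0) : x = y :=
  funext fun j => by rw [Subsingleton.elim j 0]; exact h

lemma term_apply (f : TropPoly 1) (i : Fin 1 → ℤ) (x : Fin 1 → ℝ) :
    f.term i x = f.coeff i + (i 0 : ℝ) * x 0 := by
  simp [TropPoly.term, Fin.sum_univ_one]

lemma eval_sup' (f : TropPoly 1) (hf : f.support.Nonempty) (x : Fin 1 → ℝ) :
    f.eval x = ((f.support.sup' hf fun i => f.term i x : ℝ) : EReal) := by
  apply le_antisymm
  · apply Finset.sup_le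
    intro i hi
    exact EReal.coe_le_coe_iff.2 (Finset.le_sup' (fun i => f.term i x) hi)
  · obtain ⟨i, hi, hie⟩ := Finset.exists_mem_eq_sup' hf fun i => f.term i x
    rw [hie]
    exact Finset.le_sup (f := fun i => ((f.term i x : ℝ) : EReal)) hi

noncomputable def Bz (f : TropPoly 1) (hf : f.support.Nonempty) : ℤ :=
  f.support.sup' hf fun i => i 0

noncomputable def Az (f : TropPoly 1) (hf : f.support.Nonempty) : ℤ :=
  f.support.inf' hf fun i => i 0

lemma memB (f : TropPoly 1) (hf : f.support.Nonempty) :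
    (fun _ => Bz f hf : Fin 1 → ℤ) ∈ f.support := by
  obtain ⟨i, hi, hie⟩ := Finset.exists_mem_eq_sup' hf fun i => i 0
  have : (fun _ => Bz f hf : Fin 1 → ℤ) = i := fin1_ext (by rw [Bz, hie])
  rwa [this]

lemma memA (f : TropPoly 1) (hf : f.support.Nonempty) :
    (fun _ => Az f hf : Fin 1 → ℤ) ∈ f.support := by
  obtain ⟨i, hi, hie⟩ := Finset.exists_mem_eq_inf' hf fun i => i 0
  have : (fun _ => Az f hf : Fin 1 → ℤ) = i := fin1_ext (by rw [Az, hie])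
  rwa [this]

lemma Az_le_Bz (f : TropPoly 1) (hf : f.support.Nonempty) : Az f hf ≤ Bz f hf := by
  have hf' := hf
  obtain ⟨i, hi⟩ := hf'
  have h1 : Az f hf ≤ i 0 := Finset.inf'_le (fun j => j 0) hi
  have h2 : i 0 ≤ Bz f hf := Finset.le_sup' (fun j => j 0) hi
  omega

/-- the real piecewise-linear function underlying `f`. -/
noncomputable def F (f : TropPoly 1) (hf : f.support.Nonempty) (x : ℝ) : ℝ :=
  f.support.sup' hf fun i => f.term i (fun _ => x)

lemma slope_top (f : TropPoly 1) (hf : f.support.Nonempty) :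
    ∃ M : ℝ, 1 ≤ M ∧ ∀ x : ℝ, M ≤ x →
      F f hf x = f.coeff (fun _ => Bz f hf) + (Bz f hf : ℝ) * x := by
  set B := Bz f hf with hB
  set cB := f.coeff (fun _ => B) with hcB
  refine ⟨max 1 (f.support.sup' hf fun i => f.coeff i - cB + 1), le_max_left _ _, ?_⟩
  intro x hx
  have hx1 : (1:ℝ) ≤ x := le_trans (le_max_left _ _) hx
  apply le_antisymm
  · apply Finset.sup'_le
    intro i hi
    rw [term_apply]
    have hiB : i 0 ≤ B := Finset.le_sup' (fun j => j 0) hi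
    rcases eq_or_lt_of_le hiB with h | h
    · have he : i = (fun _ => B) := fin1_ext h
      rw [he]
    · have h1 : (1:ℤ) ≤ B - i 0 := by omega
      have h1' : (1:ℝ) ≤ (B:ℝ) - (i 0 : ℝ) := by exact_mod_cast h1
      have h2 : f.coeff i - cB + 1 ≤ x :=
        le_trans (le_trans (Finset.le_sup' (fun i => f.coeff i - cB + 1) hi) (le_max_right _ _)) hx
      nlinarith
  · have := Finset.le_sup' (fun i => f.term i (fun _ => x)) (memB f hf)
    rwa [term_apply] at this

lemma slope_bot (f : TropPoly 1) (hf : f.support.Nonempty) :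
    ∃ M : ℝ, 1 ≤ M ∧ ∀ x : ℝ, x ≤ -M →
      F f hf x = f.coeff (fun _ => Az f hf) + (Az f hf : ℝ) * x := by
  set A := Az f hf with hA
  set cA := f.coeff (fun _ => A) with hcA
  refine ⟨max 1 (f.support.sup' hf fun i => f.coeff i - cA + 1), le_max_left _ _, ?_⟩
  intro x hx
  have hx1 : x ≤ -1 := le_trans hx (by simp [le_max_left])
  apply le_antisymm
  · apply Finset.sup'_le
    intro i hi
    rw [term_apply]
    have hiA : A ≤ i 0 := Finset.inf'_le (fun j => j 0) hi
    rcases eq_or_lt_of_le hiA with h | h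
    · have he : i = (fun _ => A) := fin1_ext h.symm
      rw [he]
    · have h1 : (1:ℤ) ≤ i 0 - A := by omega
      have h1' : (1:ℝ) ≤ (i 0 : ℝ) - (A:ℝ) := by exact_mod_cast h1
      have h2 : f.coeff i - cA + 1 ≤ -x := by
        have := le_trans (Finset.le_sup' (fun i => f.coeff i - cA + 1) hi) (le_max_right 1 _)
        linarith
      nlinarith
  · have := Finset.le_sup' (fun i => f.term i (fun _ => x)) (memA f hf)
    rwa [term_apply] at this

lemma slope_unique {c1 c2 s1 s2 M : ℝ} (h : ∀ x : ℝ, M ≤ x → c1 + s1 * x = c2 + s2 * x) :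
    s1 = s2 := by
  have h1 := h (max M 0 + 1) (by linarith [le_max_left M 0])
  have h2 := h (max M 0 + 2) (by linarith [le_max_left M 0])
  nlinarith

end TropAux

namespace TropAux
open TropPoly

lemma tropDiv_real (f g : TropPoly 1) (hf : f.support.Nonempty) (hg : g.support.Nonempty)
    (x : ℝ) : tropDiv f g (fun _ => x) = ((F f hf x - F g hg x : ℝ) : EReal) := by
  rw [tropDiv, eval_sup' f hf, eval_sup' g hg, ← EReal.coe_sub]
  rfl

lemma slope_unique' {c1 c2 s1 s2 M : ℝ} (h : ∀ x : ℝ, x ≤ -M → c1 + s1 * x = c2 + s2 * x) :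
    s1 = s2 := by
  have h1 := h (-(max M 0) - 1) (by linarith [le_max_left M 0])
  have h2 := h (-(max M 0) - 2) (by linarith [le_max_left M 0])
  nlinarith

lemma rep_real (f g f' g' : TropPoly 1) (hf : f.support.Nonempty) (hg : g.support.Nonempty)
    (hf' : f'.support.Nonempty) (hg' : g'.support.Nonempty)
    (h : ∀ x, tropDiv f g x = tropDiv f' g' x) (x : ℝ) :
    F f hf x + F g' hg' x = F f' hf' x + F g hg x := by
  have := h (fun _ => x)
  rw [tropDiv_real f g hf hg, tropDiv_real f' g' hf' hg'] at this
  have h2 := EReal.coe_eq_coe_iff.1 this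
  linarith

lemma B_invariant (f g f' g' : TropPoly 1) (hf : f.support.Nonempty) (hg : g.support.Nonempty)
    (hf' : f'.support.Nonempty) (hg' : g'.support.Nonempty)
    (h : ∀ x, tropDiv f g x = tropDiv f' g' x) :
    Bz f hf + Bz g' hg' = Bz f' hf' + Bz g hg := by
  obtain ⟨M1, hM1, h1⟩ := slope_top f hf
  obtain ⟨M2, hM2, h2⟩ := slope_top g hg
  obtain ⟨M3, hM3, h3⟩ := slope_top f' hf'
  obtain ⟨M4, hM4, h4⟩ := slope_top g' hg'
  have key : ∀ x : ℝ, max (max M1 M2) (max M3 M4) ≤ x →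
      (f.coeff (fun _ => Bz f hf) + g'.coeff (fun _ => Bz g' hg')) +
        ((Bz f hf : ℝ) + (Bz g' hg' : ℝ)) * x =
      (f'.coeff (fun _ => Bz f' hf') + g.coeff (fun _ => Bz g hg)) +
        ((Bz f' hf' : ℝ) + (Bz g hg : ℝ)) * x := by
    intro x hx
    have e1 := h1 x (le_trans (le_trans (le_max_left _ _) (le_max_left _ _)) hx)
    have e2 := h2 x (le_trans (le_trans (le_max_right _ _) (le_max_left _ _)) hx)
    have e3 := h3 x (le_trans (le_trans (le_max_left _ _) (le_max_right _ _)) hx)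
    have e4 := h4 x (le_trans (le_trans (le_max_right _ _) (le_max_right _ _)) hx)
    have e := rep_real f g f' g' hf hg hf' hg' h x
    rw [e1, e2, e3, e4] at e
    ring_nf
    ring_nf at e
    linarith
  have := slope_unique key
  exact_mod_cast this

lemma A_invariant (f g f' g' : TropPoly 1) (hf : f.support.Nonempty) (hg : g.support.Nonempty)
    (hf' : f'.support.Nonempty) (hg' : g'.support.Nonempty)
    (h : ∀ x, tropDiv f g x = tropDiv f' g' x) :
    Az f hf + Az g' hg' = Az f' hf' + Az g hg := by
  obtain ⟨M1, hM1, h1⟩ := slope_bot f hf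
  obtain ⟨M2, hM2, h2⟩ := slope_bot g hg
  obtain ⟨M3, hM3, h3⟩ := slope_bot f' hf'
  obtain ⟨M4, hM4, h4⟩ := slope_bot g' hg'
  have key : ∀ x : ℝ, x ≤ -(max (max M1 M2) (max M3 M4)) →
      (f.coeff (fun _ => Az f hf) + g'.coeff (fun _ => Az g' hg')) +
        ((Az f hf : ℝ) + (Az g' hg' : ℝ)) * x =
      (f'.coeff (fun _ => Az f' hf') + g.coeff (fun _ => Az g hg)) +
        ((Az f' hf' : ℝ) + (Az g hg : ℝ)) * x := by
    intro x hx
    have e1 := h1 x (by have := le_trans (le_max_left M1 M2) (le_max_left _ (max M3 M4)); linarith)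
    have e2 := h2 x (by have := le_trans (le_max_right M1 M2) (le_max_left _ (max M3 M4)); linarith)
    have e3 := h3 x (by have := le_trans (le_max_left M3 M4) (le_max_right (max M1 M2) _); linarith)
    have e4 := h4 x (by have := le_trans (le_max_right M3 M4) (le_max_right (max M1 M2) _); linarith)
    have e := rep_real f g f' g' hf hg hf' hg' h x
    rw [e1, e2, e3, e4] at e
    ring_nf
    ring_nf at e
    linarith
  have := slope_unique' key
  exact_mod_cast this

lemma support_nonempty_of_rep (f' g' f₀ g₀ : TropPoly 1)
    (hf₀ : f₀.support.Nonempty) (hg₀ : g₀.support.Nonempty)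
    (h : ∀ x, tropDiv f' g' x = tropDiv f₀ g₀ x) : f'.support.Nonempty := by
  by_contra h'
  rw [Finset.not_nonempty_iff_eq_empty] at h'
  have h0 := h (fun _ => 0)
  rw [tropDiv_real f₀ g₀ hf₀ hg₀] at h0
  have : f'.eval (fun _ => 0) = ⊥ := by
    rw [TropPoly.eval, h', Finset.sup_empty]
  rw [tropDiv, this, EReal.bot_sub] at h0
  exact EReal.coe_ne_bot _ h0.symm

end TropAux

namespace TropAux
open TropPoly Set

def Trap (a b c d : ℝ) : Set (Fin 2 → ℝ) :=
  {x | 0 ≤ x 1 ∧ x 1 ≤ 1 ∧ (1 - x 1) * a + x 1 * c ≤ x 0 ∧ x 0 ≤ (1 - x 1) * b + x 1 * d}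

lemma trap_eq (a b c d : ℝ) : Trap a b c d =
    {x : Fin 2 → ℝ | 0 ≤ x 1} ∩ {x | x 1 ≤ 1} ∩
    {x | a ≤ 1 * x 0 + (a - c) * x 1} ∩ {x | 1 * x 0 + (b - d) * x 1 ≤ b} := by
  ext x
  simp only [Trap, Set.mem_inter_iff, Set.mem_setOf_eq]
  constructor
  · rintro ⟨h1, h2, h3, h4⟩
    refine ⟨⟨⟨h1, h2⟩, by nlinarith⟩, by nlinarith⟩
  · rintro ⟨⟨⟨h1, h2⟩, h3⟩, h4⟩
    refine ⟨h1, h2, by nlinarith, by nlinarith⟩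

lemma isLinear_comb (u v : ℝ) : IsLinearMap ℝ (fun x : Fin 2 → ℝ => u * x 0 + v * x 1) := by
  constructor
  · intro x y
    show u * (x 0 + y 0) + v * (x 1 + y 1) = _
    ring
  · intro r x
    show u * (r * x 0) + v * (r * x 1) = r * (u * x 0 + v * x 1)
    ring

lemma convex_trap (a b c d : ℝ) : Convex ℝ (Trap a b c d) := by
  rw [trap_eq]
  refine (((?_ : Convex ℝ _).inter ?_).inter ?_).inter ?_
  · exact convex_halfSpace_ge (by simpa using isLinear_comb 0 1) (0:ℝ)
  · exact convex_halfSpace_le (by simpa using isLinear_comb 0 1) (1:ℝ)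
  · exact convex_halfSpace_ge (isLinear_comb 1 (a - c)) a
  · exact convex_halfSpace_le (isLinear_comb 1 (b - d)) b

lemma Newt_subset (f : TropPoly 1) (hf : f.support.Nonempty) :
    Newt f ⊆ {v : Fin 1 → ℝ | ((Az f hf : ℝ)) ≤ v 0 ∧ v 0 ≤ ((Bz f hf : ℝ))} := by
  apply convexHull_min
  · rintro v ⟨i, hi, rfl⟩
    have h1 : Az f hf ≤ i 0 := Finset.inf'_le (fun j => j 0) hi
    have h2 : i 0 ≤ Bz f hf := Finset.le_sup' (fun j => j 0) hi
    constructor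
    · show ((Az f hf : ℝ)) ≤ ((i 0 : ℝ))
      exact_mod_cast h1
    · show ((i 0 : ℝ)) ≤ ((Bz f hf : ℝ))
      exact_mod_cast h2
  · exact (convex_Icc ((Az f hf : ℝ)) ((Bz f hf : ℝ))).is_linear_preimage
      (⟨fun _ _ => rfl, fun _ _ => rfl⟩ : IsLinearMap ℝ (fun v : Fin 1 → ℝ => v 0))

lemma const_mem_Newt (f : TropPoly 1) (i : Fin 1 → ℤ) (hi : i ∈ f.support) :
    (fun _ => (i 0 : ℝ) : Fin 1 → ℝ) ∈ Newt f := by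
  apply subset_convexHull ℝ _
  exact ⟨i, hi, funext fun j => by rw [Subsingleton.elim j 0]; rfl⟩

lemma combo_mem_Newt (f : TropPoly 1) (hf : f.support.Nonempty) (s : ℝ)
    (hs0 : 0 ≤ s) (hs1 : s ≤ 1) :
    (fun _ => (1 - s) * (Az f hf : ℝ) + s * (Bz f hf : ℝ) : Fin 1 → ℝ) ∈ Newt f := by
  have hA : (fun _ => (Az f hf : ℝ) : Fin 1 → ℝ) ∈ Newt f := const_mem_Newt f _ (memA f hf)
  have hB : (fun _ => (Bz f hf : ℝ) : Fin 1 → ℝ) ∈ Newt f := const_mem_Newt f _ (memB f hf)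
  exact (convex_convexHull ℝ _) hA hB (by linarith : (0:ℝ) ≤ 1 - s) hs0 (by ring)

lemma snoc_zero (v : Fin 1 → ℝ) (r : ℝ) : (Fin.snoc v r : Fin 2 → ℝ) 0 = v 0 := by
  simp [Fin.snoc]

lemma snoc_one (v : Fin 1 → ℝ) (r : ℝ) : (Fin.snoc v r : Fin 2 → ℝ) 1 = r := by
  simp [Fin.snoc]

lemma pairPolytope_eq (f g : TropPoly 1) (hf : f.support.Nonempty) (hg : g.support.Nonempty) :
    pairPolytope f g = Trap (Az f hf) (Bz f hf) (Az g hg) (Bz g hg) := by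
  have hab : ((Az f hf : ℝ)) ≤ ((Bz f hf : ℝ)) := by exact_mod_cast Az_le_Bz f hf
  have hcd : ((Az g hg : ℝ)) ≤ ((Bz g hg : ℝ)) := by exact_mod_cast Az_le_Bz g hg
  apply Set.Subset.antisymm
  · apply convexHull_min _ (convex_trap _ _ _ _)
    rintro w (⟨v, hv, rfl⟩ | ⟨v, hv, rfl⟩)
    · obtain ⟨h1, h2⟩ := Newt_subset f hf hv
      refine ⟨?_, ?_, ?_, ?_⟩ <;> simp only [snoc_zero, snoc_one] <;> norm_num
      · linarith
      · linarith
    · obtain ⟨h1, h2⟩ := Newt_subset g hg hv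
      refine ⟨?_, ?_, ?_, ?_⟩ <;> simp only [snoc_zero, snoc_one] <;> norm_num
      · linarith
      · linarith
  · intro x hx
    obtain ⟨ht0, ht1, hL, hU⟩ := hx
    set t := x 1 with htdef
    set a := ((Az f hf : ℝ)) with ha
    set b := ((Bz f hf : ℝ)) with hb
    set c := ((Az g hg : ℝ)) with hc
    set d := ((Bz g hg : ℝ)) with hd
    have hLU : (1 - t) * a + t * c ≤ (1 - t) * b + t * d := by nlinarith
    set L := (1 - t) * a + t * c with hLdef
    set U := (1 - t) * b + t * d with hUdef
    set s : ℝ := if U - L = 0 then 0 else (x 0 - L) / (U - L) with hsdef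
    have hULpos : U - L ≠ 0 → 0 < U - L := by
      intro h
      rcases lt_or_eq_of_le (by linarith : (0:ℝ) ≤ U - L) with h' | h'
      · linarith
      · exact absurd h'.symm h
    have hs0 : 0 ≤ s := by
      rw [hsdef]; split_ifs with h
      · exact le_rfl
      · exact div_nonneg (by linarith) (le_of_lt (hULpos h))
    have hs1 : s ≤ 1 := by
      rw [hsdef]; split_ifs with h
      · norm_num
      · rw [div_le_one (hULpos h)]; linarith
    have hx0 : x 0 = (1 - s) * L + s * U := by
      rw [hsdef]; split_ifs with h
      · norm_num; linarith
      · have := hULpos h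
        field_simp
        ring
    set p : Fin 2 → ℝ := Fin.snoc (fun _ => (1 - s) * a + s * b) 0 with hp
    set q : Fin 2 → ℝ := Fin.snoc (fun _ => (1 - s) * c + s * d) 1 with hq
    have hpm : p ∈ (fun v : Fin 1 → ℝ => Fin.snoc v (0 : ℝ)) '' f.Newt :=
      ⟨_, combo_mem_Newt f hf s hs0 hs1, rfl⟩
    have hqm : q ∈ (fun v : Fin 1 → ℝ => Fin.snoc v (1 : ℝ)) '' g.Newt :=
      ⟨_, combo_mem_Newt g hg s hs0 hs1, rfl⟩
    have hxpq : x = (1 - t) • p + t • q := by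
      funext j
      have hj : ((1 - t) • p + t • q) j = (1 - t) * p j + t * q j := rfl
      rw [hj]
      fin_cases j
      · show x 0 = (1 - t) * p 0 + t * q 0
        rw [hp, hq]
        simp only [snoc_zero, snoc_one]
        rw [hx0, hLdef, hUdef]
        ring
      · show x 1 = (1 - t) * p 1 + t * q 1
        rw [hp, hq]
        simp only [snoc_zero, snoc_one]
        rw [← htdef]
        ring
    rw [hxpq]
    have hcx : Convex ℝ (f.pairPolytope g) := convex_convexHull ℝ _
    have hsub : ((fun v : Fin 1 → ℝ => Fin.snoc v (0:ℝ)) '' f.Newt ∪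
        (fun v : Fin 1 → ℝ => Fin.snoc v (1:ℝ)) '' g.Newt) ⊆ f.pairPolytope g :=
      subset_convexHull ℝ _
    have hp' : p ∈ f.pairPolytope g := hsub (Or.inl hpm)
    have hq' : q ∈ f.pairPolytope g := hsub (Or.inr hqm)
    exact hcx hp' hq' (by linarith) ht0 (by ring)

end TropAux

namespace TropAux
open TropPoly Set

def RegT (a b c d : ℝ) : Set (ℝ × ℝ) :=
  {p | p.1 ∈ Set.Icc (0:ℝ) 1 ∧
       p.2 ∈ Set.Icc ((1 - p.1) * a + p.1 * c) ((1 - p.1) * b + p.1 * d)}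

lemma isClosed_regT (a b c d : ℝ) : IsClosed (RegT a b c d) := by
  have : RegT a b c d = {p : ℝ×ℝ | 0 ≤ p.1} ∩ {p | p.1 ≤ 1} ∩
      {p | (1 - p.1) * a + p.1 * c ≤ p.2} ∩ {p | p.2 ≤ (1 - p.1) * b + p.1 * d} := by
    ext p
    simp only [RegT, Set.mem_setOf_eq, Set.mem_Icc, Set.mem_inter_iff]
    tauto
  rw [this]
  refine IsClosed.inter (IsClosed.inter (IsClosed.inter ?_ ?_) ?_) ?_
  · exact isClosed_le continuous_const continuous_fst
  · exact isClosed_le continuous_fst continuous_const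
  · exact isClosed_le (by fun_prop) continuous_snd
  · exact isClosed_le continuous_snd (by fun_prop)

lemma measurePreserving_m :
    MeasurePreserving (fun x : Fin 2 → ℝ => (x 1, x 0)) volume volume := by
  have h1 := volume_preserving_finTwoArrow ℝ
  have h2 : MeasurePreserving (Prod.swap : ℝ×ℝ → ℝ×ℝ) volume volume := by
    rw [Measure.volume_eq_prod]
    exact Measure.measurePreserving_swap
  exact h2.comp h1

lemma volume_regT (a b c d : ℝ) (hab : a ≤ b) (hcd : c ≤ d) :
    volume (RegT a b c d) = ENNReal.ofReal (((b - a) + (d - c)) / 2) := by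
  have hm : MeasurableSet (RegT a b c d) := (isClosed_regT a b c d).measurableSet
  rw [Measure.volume_eq_prod, Measure.prod_apply hm]
  have hsect : ∀ t : ℝ, (Prod.mk t ⁻¹' RegT a b c d) =
      if t ∈ Set.Icc (0:ℝ) 1 then Set.Icc ((1-t)*a + t*c) ((1-t)*b + t*d) else ∅ := by
    intro t
    split_ifs with ht
    · ext u
      simp only [RegT, Set.mem_preimage, Set.mem_setOf_eq]
      exact ⟨fun h => h.2, fun h => ⟨ht, h⟩⟩
    · ext u
      simp only [RegT, Set.mem_preimage, Set.mem_setOf_eq, Set.mem_empty_iff_false, iff_false]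
      exact fun h => ht h.1
  calc ∫⁻ t, volume (Prod.mk t ⁻¹' RegT a b c d)
      = ∫⁻ t, Set.indicator (Set.Icc (0:ℝ) 1)
          (fun t => ENNReal.ofReal ((1-t)*(b-a) + t*(d-c))) t := by
        apply lintegral_congr
        intro t
        rw [hsect t]
        by_cases ht : t ∈ Set.Icc (0:ℝ) 1
        · rw [if_pos ht, Set.indicator_of_mem ht, Real.volume_Icc]
          congr 1
          ring
        · rw [if_neg ht, Set.indicator_of_notMem ht, measure_empty]
    _ = ∫⁻ t in Set.Icc (0:ℝ) 1, ENNReal.ofReal ((1-t)*(b-a) + t*(d-c)) :=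
        lintegral_indicator measurableSet_Icc _
    _ = ENNReal.ofReal (∫ t in Set.Icc (0:ℝ) 1, ((1-t)*(b-a) + t*(d-c))) := by
        rw [← ofReal_integral_eq_lintegral_ofReal]
        · exact (Continuous.integrableOn_Icc (by fun_prop))
        · refine (ae_restrict_iff' measurableSet_Icc).2 (Filter.Eventually.of_forall ?_)
          intro t ht
          obtain ⟨ht0, ht1⟩ := ht
          show (0:ℝ) ≤ (1-t)*(b-a) + t*(d-c)
          nlinarith
    _ = ENNReal.ofReal (((b - a) + (d - c)) / 2) := by
        congr 1
        rw [MeasureTheory.integral_Icc_eq_integral_Ioc,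
          ← intervalIntegral.integral_of_le (by norm_num : (0:ℝ) ≤ 1)]
        rw [intervalIntegral.integral_congr
          (g := fun t : ℝ => (b-a) + ((d-c)-(b-a))*t) (fun t _ => by ring)]
        rw [intervalIntegral.integral_add intervalIntegrable_const
          (IntervalIntegrable.const_mul intervalIntegral.intervalIntegrable_id _)]
        rw [intervalIntegral.integral_const_mul, integral_id, intervalIntegral.integral_const]
        norm_num
        ring

end TropAux

namespace TropAux
open TropPoly Set

lemma vol_eq (f g : TropPoly 1) (hf : f.support.Nonempty) (hg : g.support.Nonempty) :
    vol f g = (((Bz f hf : ℝ) - (Az f hf : ℝ)) + ((Bz g hg : ℝ) - (Az g hg : ℝ))) / 2 := by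
  have hab : ((Az f hf : ℝ)) ≤ ((Bz f hf : ℝ)) := by exact_mod_cast Az_le_Bz f hf
  have hcd : ((Az g hg : ℝ)) ≤ ((Bz g hg : ℝ)) := by exact_mod_cast Az_le_Bz g hg
  set a := ((Az f hf : ℝ)) with ha
  set b := ((Bz f hf : ℝ)) with hb
  set c := ((Az g hg : ℝ)) with hc
  set d := ((Bz g hg : ℝ)) with hd
  have hTR : Trap a b c d = (fun x : Fin 2 → ℝ => (x 1, x 0)) ⁻¹' RegT a b c d := by
    ext x
    simp only [Trap, RegT, Set.mem_setOf_eq, Set.mem_preimage, Set.mem_Icc]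
    tauto
  have hvol : volume (pairPolytope f g) = ENNReal.ofReal (((b - a) + (d - c)) / 2) := by
    rw [pairPolytope_eq f g hf hg, hTR,
      measurePreserving_m.measure_preimage
        ((isClosed_regT a b c d).measurableSet.nullMeasurableSet),
      volume_regT a b c d hab hcd]
  have hint : 0 < (b - a) + (d - c) → affineSpan ℝ (pairPolytope f g) = ⊤ := by
    intro hpos
    have hconv : Convex ℝ (pairPolytope f g) := convex_convexHull ℝ _
    rw [← hconv.interior_nonempty_iff_affineSpan_eq_top]
    refine ⟨Fin.snoc (fun _ => (a+b+c+d)/4) (1/2 : ℝ), ?_⟩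
    rw [mem_interior]
    refine ⟨{x : Fin 2 → ℝ | 0 < x 1} ∩ {x | x 1 < 1} ∩
      {x | (1 - x 1)*a + x 1*c < x 0} ∩ {x | x 0 < (1 - x 1)*b + x 1*d}, ?_, ?_, ?_⟩
    · rw [pairPolytope_eq f g hf hg]
      rintro x ⟨⟨⟨h1, h2⟩, h3⟩, h4⟩
      exact ⟨le_of_lt h1, le_of_lt h2, le_of_lt h3, le_of_lt h4⟩
    · refine IsOpen.inter (IsOpen.inter (IsOpen.inter ?_ ?_) ?_) ?_
      · exact isOpen_lt continuous_const (continuous_apply 1)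
      · exact isOpen_lt (continuous_apply 1) continuous_const
      · exact isOpen_lt (by fun_prop) (continuous_apply 0)
      · exact isOpen_lt (continuous_apply 0) (by fun_prop)
    · refine ⟨⟨⟨?_, ?_⟩, ?_⟩, ?_⟩
      · show (0:ℝ) < (Fin.snoc (fun _ => (a+b+c+d)/4) (1/2 : ℝ) : Fin 2 → ℝ) 1
        rw [snoc_one]; norm_num
      · show (Fin.snoc (fun _ => (a+b+c+d)/4) (1/2 : ℝ) : Fin 2 → ℝ) 1 < 1
        rw [snoc_one]; norm_num
      · show (1 - (Fin.snoc (fun _ => (a+b+c+d)/4) (1/2 : ℝ) : Fin 2 → ℝ) 1) * a +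
          (Fin.snoc (fun _ => (a+b+c+d)/4) (1/2 : ℝ) : Fin 2 → ℝ) 1 * c <
          (Fin.snoc (fun _ => (a+b+c+d)/4) (1/2 : ℝ) : Fin 2 → ℝ) 0
        rw [snoc_one, snoc_zero]; linarith
      · show (Fin.snoc (fun _ => (a+b+c+d)/4) (1/2 : ℝ) : Fin 2 → ℝ) 0 <
          (1 - (Fin.snoc (fun _ => (a+b+c+d)/4) (1/2 : ℝ) : Fin 2 → ℝ) 1) * b +
          (Fin.snoc (fun _ => (a+b+c+d)/4) (1/2 : ℝ) : Fin 2 → ℝ) 1 * d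
        rw [snoc_one, snoc_zero]; linarith
  unfold TropPoly.vol
  split_ifs with hspan
  · rw [hvol, ENNReal.toReal_ofReal (by linarith)]
  · have h0 : (b - a) + (d - c) ≤ 0 := by
      by_contra hpos
      push_neg at hpos
      exact hspan (hint hpos)
    have h1 : (b - a) + (d - c) = 0 := le_antisymm h0 (by linarith)
    linarith

lemma wdiff_eq (f g f' g' : TropPoly 1) (hf : f.support.Nonempty) (hg : g.support.Nonempty)
    (hf' : f'.support.Nonempty) (hg' : g'.support.Nonempty)
    (h : ∀ x, tropDiv f g x = tropDiv f' g' x) :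
    (Bz f hf - Az f hf) - (Bz g hg - Az g hg)
      = (Bz f' hf' - Az f' hf') - (Bz g' hg' - Az g' hg') := by
  have hB := B_invariant f g f' g' hf hg hf' hg' h
  have hA := A_invariant f g f' g' hf hg hf' hg' h
  omega

end TropAux


/-- **Existence of a minimum volume expression in one variable.**
Every tropical rational function `φ ≠ -∞` on `ℝ` admits an expression `φ = f ⊘ g`
of minimum volume. -/
theorem exists_min_vol_expression (f₀ g₀ : TropPoly 1)
    (hf₀ : f₀.support.Nonempty) (hg₀ : g₀.support.Nonempty) :
    ∃ f g : TropPoly 1, f.support.Nonempty ∧ g.support.Nonempty ∧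
      (∀ x, TropPoly.tropDiv f g x = TropPoly.tropDiv f₀ g₀ x) ∧
      ∀ f' g' : TropPoly 1, g'.support.Nonempty →
        (∀ x, TropPoly.tropDiv f' g' x = TropPoly.tropDiv f₀ g₀ x) →
        TropPoly.vol f g ≤ TropPoly.vol f' g' := by
  classical
  open TropAux in
  set N : Set ℕ := {m | ∃ f g : TropPoly 1, ∃ hf : f.support.Nonempty,
    ∃ hg : g.support.Nonempty,
    (∀ x, TropPoly.tropDiv f g x = TropPoly.tropDiv f₀ g₀ x) ∧
    (TropAux.Bz g hg - TropAux.Az g hg).toNat = m} with hNdef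
  have hN0 : (TropAux.Bz g₀ hg₀ - TropAux.Az g₀ hg₀).toNat ∈ N :=
    ⟨f₀, g₀, hf₀, hg₀, fun x => rfl, rfl⟩
  obtain ⟨f, g, hf, hg, hrep, hmin⟩ := Nat.sInf_mem (Set.nonempty_of_mem hN0)
  refine ⟨f, g, hf, hg, hrep, ?_⟩
  intro f' g' hg' hrep'
  have hf' : f'.support.Nonempty :=
    TropAux.support_nonempty_of_rep f' g' f₀ g₀ hf₀ hg₀ hrep'
  have hrel : ∀ x, TropPoly.tropDiv f g x = TropPoly.tropDiv f' g' x :=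
    fun x => (hrep x).trans (hrep' x).symm
  have hd := TropAux.wdiff_eq f g f' g' hf hg hf' hg' hrel
  have hgle : TropAux.Bz g hg - TropAux.Az g hg
      ≤ TropAux.Bz g' hg' - TropAux.Az g' hg' := by
    have hmem : (TropAux.Bz g' hg' - TropAux.Az g' hg').toNat ∈ N :=
      ⟨f', g', hf', hg', hrep', rfl⟩
    have h1 := Nat.sInf_le hmem
    rw [← hmin] at h1
    have w1 := TropAux.Az_le_Bz g hg
    have w2 := TropAux.Az_le_Bz g' hg'
    omega
  rw [TropAux.vol_eq f g hf hg, TropAux.vol_eq f' g' hf' hg']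
  have hdR : ((TropAux.Bz f hf : ℝ) - (TropAux.Az f hf : ℝ))
      - ((TropAux.Bz g hg : ℝ) - (TropAux.Az g hg : ℝ))
      = ((TropAux.Bz f' hf' : ℝ) - (TropAux.Az f' hf' : ℝ))
      - ((TropAux.Bz g' hg' : ℝ) - (TropAux.Az g' hg' : ℝ)) := by exact_mod_cast hd
  have hgleR : ((TropAux.Bz g hg : ℝ) - (TropAux.Az g hg : ℝ))
      ≤ ((TropAux.Bz g' hg' : ℝ) - (TropAux.Az g' hg' : ℝ)) := by exact_mod_cast hgle
  linarith
end

section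
/- Let φ : ℝ → ℝ be a tropical rational function in one variable that is not identically −∞. Suppose (f, g) and (f', g') are two pairs of one-variable tropical polynomials (with f, g, f', g' ≠ −∞) such that φ = f ⊘ g = f' ⊘ g', both expressions have the minimum possible volume among all expressions of φ as a tropical quotient, and vol(f, g) = vol(f', g'). Then there exist a ∈ ℝ and k ∈ ℤ such that f'(x) = f(x) + a + kx and g'(x) = g(x) + a + kx for all x ∈ ℝ; in particular the lifted Newton polytope of f ⊕ (y ⊙ g) is a translate of that of f' ⊕ (y ⊙ g'), so the dual subdivision of the minimum-volume expression is unique up to translation. -/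
open scoped Pointwise
open MeasureTheory

namespace TP1
open TropPoly

/-- evaluation as a real-valued function of a real variable -/
noncomputable def ev (f : TropPoly 1) (hf : f.support.Nonempty) (x : ℝ) : ℝ :=
  f.support.sup' hf fun i => f.coeff i + (i 0 : ℝ) * x

lemma expo_ext {i j : Fin 1 → ℤ} (h : i 0 = j 0) : i = j := by
  funext k
  have : k = 0 := Subsingleton.elim _ _
  rw [this, h]

lemma eval_eq (f : TropPoly 1) (hf : f.support.Nonempty) (x : Fin 1 → ℝ) :
    f.eval x = ((ev f hf (x 0) : ℝ) : EReal) := by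
  have hterm : ∀ i, f.term i x = f.coeff i + (i 0 : ℝ) * x 0 := by
    intro i; simp [TropPoly.term, Fin.sum_univ_one]
  have hmax : ∀ a b : ℝ, ((max a b : ℝ) : EReal) = max (a : EReal) (b : EReal) := by
    intro a b
    rcases le_total a b with h | h
    · rw [max_eq_right h, max_eq_right (by exact_mod_cast h)]
    · rw [max_eq_left h, max_eq_left (by exact_mod_cast h)]
  have := Finset.comp_sup'_eq_sup'_comp (g := fun r : ℝ => (r : EReal)) hf
    (f := fun i => f.coeff i + (i 0 : ℝ) * x 0) hmax
  rw [TropPoly.eval, ← Finset.sup'_eq_sup hf, ev]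
  rw [show (fun i => ((f.term i x : ℝ) : EReal)) = (fun r : ℝ => (r : EReal)) ∘
      (fun i => f.coeff i + (i 0 : ℝ) * x 0) by funext i; simp [hterm i]]
  rw [← this]

lemma term_le_ev (f : TropPoly 1) (hf) {i} (hi : i ∈ f.support) (x : ℝ) :
    f.coeff i + (i 0 : ℝ) * x ≤ ev f hf x :=
  Finset.le_sup' (f := fun i => f.coeff i + (i 0 : ℝ) * x) hi

lemma exists_active (f : TropPoly 1) (hf) (x : ℝ) :
    ∃ i ∈ f.support, f.coeff i + (i 0 : ℝ) * x = ev f hf x := by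
  obtain ⟨i, hi, h⟩ := Finset.exists_mem_eq_sup' hf (fun i => f.coeff i + (i 0 : ℝ) * x)
  exact ⟨i, hi, h.symm⟩

/-- lowest exponent -/
noncomputable def lo (f : TropPoly 1) (hf : f.support.Nonempty) : ℤ :=
  (f.support.image fun i => i 0).min' (hf.image _)

/-- highest exponent -/
noncomputable def hi (f : TropPoly 1) (hf : f.support.Nonempty) : ℤ :=
  (f.support.image fun i => i 0).max' (hf.image _)

lemma lo_le {f : TropPoly 1} (hf) {i} (hi' : i ∈ f.support) : lo f hf ≤ i 0 := by
  apply Finset.min'_le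
  exact Finset.mem_image_of_mem _ hi'

lemma le_hi {f : TropPoly 1} (hf) {i} (hi' : i ∈ f.support) : i 0 ≤ hi f hf := by
  apply Finset.le_max'
  exact Finset.mem_image_of_mem _ hi'

lemma exists_lo (f : TropPoly 1) (hf) : ∃ i ∈ f.support, i 0 = lo f hf := by
  have := (f.support.image fun i => i 0).min'_mem (hf.image _)
  rw [Finset.mem_image] at this; obtain ⟨i, hi, h⟩ := this; exact ⟨i, hi, h⟩

lemma exists_hi (f : TropPoly 1) (hf) : ∃ i ∈ f.support, i 0 = hi f hf := by
  have := (f.support.image fun i => i 0).max'_mem (hf.image _)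
  rw [Finset.mem_image] at this; obtain ⟨i, hi, h⟩ := this; exact ⟨i, hi, h⟩

lemma lo_le_hi (f : TropPoly 1) (hf) : lo f hf ≤ hi f hf := by
  obtain ⟨i, hi', h⟩ := exists_lo f hf
  exact h ▸ le_hi hf hi'

end TP1
namespace TP1
open TropPoly

/-- the set of active exponents at `x` -/
noncomputable def act (f : TropPoly 1) (hf : f.support.Nonempty) (x : ℝ) :
    Finset (Fin 1 → ℤ) :=
  @Finset.filter _ (fun i => f.coeff i + (i 0 : ℝ) * x = ev f hf x)
    (Classical.decPred _) f.support

lemma act_nonempty (f : TropPoly 1) (hf) (x : ℝ) : (act f hf x).Nonempty := by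
  obtain ⟨i, hi, h⟩ := exists_active f hf x
  exact ⟨i, Finset.mem_filter.2 ⟨hi, h⟩⟩

lemma act_subset (f : TropPoly 1) (hf) (x : ℝ) : act f hf x ⊆ f.support :=
  Finset.filter_subset _ _

lemma act_eq {f : TropPoly 1} {hf} {x : ℝ} {i} (h : i ∈ act f hf x) :
    f.coeff i + (i 0 : ℝ) * x = ev f hf x := (Finset.mem_filter.1 h).2

/-- right slope -/
noncomputable def dp (f : TropPoly 1) (hf : f.support.Nonempty) (x : ℝ) : ℤ :=
  ((act f hf x).image fun i => i 0).max' ((act_nonempty f hf x).image _)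

/-- left slope -/
noncomputable def dm (f : TropPoly 1) (hf : f.support.Nonempty) (x : ℝ) : ℤ :=
  ((act f hf x).image fun i => i 0).min' ((act_nonempty f hf x).image _)

lemma exists_dp (f : TropPoly 1) (hf) (x : ℝ) : ∃ i ∈ act f hf x, i 0 = dp f hf x := by
  have := ((act f hf x).image fun i => i 0).max'_mem ((act_nonempty f hf x).image _)
  rw [Finset.mem_image] at this; obtain ⟨i, hi, h⟩ := this; exact ⟨i, hi, h⟩

lemma exists_dm (f : TropPoly 1) (hf) (x : ℝ) : ∃ i ∈ act f hf x, i 0 = dm f hf x := by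
  have := ((act f hf x).image fun i => i 0).min'_mem ((act_nonempty f hf x).image _)
  rw [Finset.mem_image] at this; obtain ⟨i, hi, h⟩ := this; exact ⟨i, hi, h⟩

lemma le_dp {f : TropPoly 1} {hf} {x : ℝ} {i} (h : i ∈ act f hf x) : i 0 ≤ dp f hf x := by
  apply Finset.le_max'; exact Finset.mem_image_of_mem _ h

lemma dm_le {f : TropPoly 1} {hf} {x : ℝ} {i} (h : i ∈ act f hf x) : dm f hf x ≤ i 0 := by
  apply Finset.min'_le; exact Finset.mem_image_of_mem _ h

lemma dm_le_dp (f : TropPoly 1) (hf) (x : ℝ) : dm f hf x ≤ dp f hf x := by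
  obtain ⟨i, hi, h⟩ := exists_dp f hf x
  exact h ▸ dm_le hi

lemma lo_le_dm (f : TropPoly 1) (hf) (x : ℝ) : lo f hf ≤ dm f hf x := by
  obtain ⟨i, hi, h⟩ := exists_dm f hf x
  exact h ▸ lo_le hf (act_subset f hf x hi)

lemma dp_le_hi (f : TropPoly 1) (hf) (x : ℝ) : dp f hf x ≤ hi f hf := by
  obtain ⟨i, hi', h⟩ := exists_dp f hf x
  exact h ▸ le_hi hf (act_subset f hf x hi')

/-- active terms give global supporting lines -/
lemma support_line {f : TropPoly 1} {hf} {x : ℝ} {i} (h : i ∈ act f hf x) (y : ℝ) :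
    ev f hf x + (i 0 : ℝ) * (y - x) ≤ ev f hf y := by
  have h1 := term_le_ev f hf (act_subset f hf x h) y
  have h2 := act_eq h
  nlinarith [h1, h2]

/-- locally affine to the right, with slope `dp` -/
lemma right_affine (f : TropPoly 1) (hf) (x : ℝ) :
    ∃ ε > 0, ∀ y, x ≤ y → y ≤ x + ε →
      ev f hf y = ev f hf x + (dp f hf x : ℝ) * (y - x) := by
  classical
  set d := dp f hf x with hd
  set t := f.support.filter (fun i => f.coeff i + (i 0 : ℝ) * x ≠ ev f hf x) with ht
  set εfun : (Fin 1 → ℤ) → ℝ :=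
    fun i => (ev f hf x - (f.coeff i + (i 0 : ℝ) * x)) / (|(i 0 : ℝ) - d| + 1) with hεfun
  have hεpos : ∀ i ∈ t, 0 < εfun i := by
    intro i hi
    rw [ht, Finset.mem_filter] at hi
    have hle := term_le_ev f hf hi.1 x
    have hlt : f.coeff i + (i 0 : ℝ) * x < ev f hf x := lt_of_le_of_ne hle hi.2
    apply div_pos (by linarith) (by positivity)
  obtain ⟨ε, hεp, hεle⟩ : ∃ ε > 0, ∀ i ∈ t, ε ≤ εfun i := by
    rcases t.eq_empty_or_nonempty with h | h
    · exact ⟨1, one_pos, by simp [h]⟩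
    · refine ⟨t.inf' h εfun, ?_, fun i hi => Finset.inf'_le _ hi⟩
      exact (Finset.lt_inf'_iff h).2 (fun i hi => hεpos i hi)
  refine ⟨ε, hεp, fun y hxy hyε => ?_⟩
  obtain ⟨i₀, hi₀, hi₀d⟩ := exists_dp f hf x
  apply le_antisymm
  · rw [ev]
    apply Finset.sup'_le
    intro i hil
    by_cases hia : f.coeff i + (i 0 : ℝ) * x = ev f hf x
    · have hid : (i 0 : ℝ) ≤ (d : ℝ) := by
        exact_mod_cast le_dp (Finset.mem_filter.2 ⟨hil, hia⟩)
      nlinarith [hid, sub_nonneg.2 hxy]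
    · have hit : i ∈ t := Finset.mem_filter.2 ⟨hil, hia⟩
      have h1 : y - x ≤ εfun i := le_trans (by linarith) (hεle i hit)
      have hgap : 0 < ev f hf x - (f.coeff i + (i 0 : ℝ) * x) := by
        have hle := term_le_ev f hf hil x
        exact sub_pos.2 (lt_of_le_of_ne hle hia)
      set a := |(i 0 : ℝ) - d| with ha
      have ha0 : 0 ≤ a := abs_nonneg _
      have h2 : (y - x) * (a + 1) ≤ ev f hf x - (f.coeff i + (i 0 : ℝ) * x) := by
        rw [hεfun] at h1
        calc (y - x) * (a + 1) ≤
            ((ev f hf x - (f.coeff i + (i 0 : ℝ) * x)) / (a + 1)) * (a + 1) := by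
              apply mul_le_mul_of_nonneg_right h1 (by positivity)
          _ = _ := by field_simp
      have h3 : (i 0 : ℝ) - d ≤ a := le_abs_self _
      nlinarith [sub_nonneg.2 hxy]
  · have h1 := support_line hi₀ y
    rw [hi₀d] at h1
    exact h1

/-- locally affine to the left, with slope `dm` -/
lemma left_affine (f : TropPoly 1) (hf) (x : ℝ) :
    ∃ ε > 0, ∀ y, x - ε ≤ y → y ≤ x →
      ev f hf y = ev f hf x + (dm f hf x : ℝ) * (y - x) := by
  classical
  set d := dm f hf x with hd
  set t := f.support.filter (fun i => f.coeff i + (i 0 : ℝ) * x ≠ ev f hf x) with ht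
  set εfun : (Fin 1 → ℤ) → ℝ :=
    fun i => (ev f hf x - (f.coeff i + (i 0 : ℝ) * x)) / (|(i 0 : ℝ) - d| + 1) with hεfun
  have hεpos : ∀ i ∈ t, 0 < εfun i := by
    intro i hi
    rw [ht, Finset.mem_filter] at hi
    have hle := term_le_ev f hf hi.1 x
    have hlt : f.coeff i + (i 0 : ℝ) * x < ev f hf x := lt_of_le_of_ne hle hi.2
    apply div_pos (by linarith) (by positivity)
  obtain ⟨ε, hεp, hεle⟩ : ∃ ε > 0, ∀ i ∈ t, ε ≤ εfun i := by
    rcases t.eq_empty_or_nonempty with h | h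
    · exact ⟨1, one_pos, by simp [h]⟩
    · refine ⟨t.inf' h εfun, ?_, fun i hi => Finset.inf'_le _ hi⟩
      exact (Finset.lt_inf'_iff h).2 (fun i hi => hεpos i hi)
  refine ⟨ε, hεp, fun y hεy hyx => ?_⟩
  obtain ⟨i₀, hi₀, hi₀d⟩ := exists_dm f hf x
  apply le_antisymm
  · rw [ev]
    apply Finset.sup'_le
    intro i hil
    by_cases hia : f.coeff i + (i 0 : ℝ) * x = ev f hf x
    · have hid : (d : ℝ) ≤ (i 0 : ℝ) := by
        exact_mod_cast dm_le (Finset.mem_filter.2 ⟨hil, hia⟩)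
      nlinarith [hid, sub_nonpos.2 hyx]
    · have hit : i ∈ t := Finset.mem_filter.2 ⟨hil, hia⟩
      have h1 : x - y ≤ εfun i := le_trans (by linarith) (hεle i hit)
      have hgap : 0 < ev f hf x - (f.coeff i + (i 0 : ℝ) * x) := by
        have hle := term_le_ev f hf hil x
        exact sub_pos.2 (lt_of_le_of_ne hle hia)
      set a := |(i 0 : ℝ) - d| with ha
      have ha0 : 0 ≤ a := abs_nonneg _
      have h2 : (x - y) * (a + 1) ≤ ev f hf x - (f.coeff i + (i 0 : ℝ) * x) := by
        calc (x - y) * (a + 1) ≤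
            ((ev f hf x - (f.coeff i + (i 0 : ℝ) * x)) / (a + 1)) * (a + 1) := by
              apply mul_le_mul_of_nonneg_right (by rw [hεfun] at h1; exact h1) (by positivity)
          _ = _ := by field_simp
      have h3 : -((i 0 : ℝ) - d) ≤ a := neg_le_abs _
      nlinarith [sub_nonpos.2 hyx]
  · have h1 := support_line hi₀ y
    rw [hi₀d] at h1
    exact h1

lemma dp_le_dm_of_lt (f : TropPoly 1) (hf) {x y : ℝ} (hxy : x < y) :
    dp f hf x ≤ dm f hf y := by
  obtain ⟨i, hi, hid⟩ := exists_dp f hf x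
  obtain ⟨j, hj, hjd⟩ := exists_dm f hf y
  have h1 := support_line hi y
  have h2 := support_line hj x
  have hle : (i 0 : ℝ) ≤ (j 0 : ℝ) := by nlinarith
  rw [← hid, ← hjd]; exact_mod_cast hle

lemma right_slope_eq (f : TropPoly 1) (hf) (x : ℝ) {s : ℝ} {ε : ℝ} (hε : 0 < ε)
    (h : ∀ y, x ≤ y → y ≤ x + ε → ev f hf y = ev f hf x + s * (y - x)) :
    s = (dp f hf x : ℝ) := by
  obtain ⟨ε2, hε2, h2⟩ := right_affine f hf x
  set δ := min ε ε2 with hδ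
  have hδpos : 0 < δ := lt_min hε hε2
  have e1 := h (x + δ) (by linarith) (by have h5 := min_le_left ε ε2; rw [hδ]; linarith)
  have e2 := h2 (x + δ) (by linarith) (by have h5 := min_le_right ε ε2; rw [hδ]; linarith)
  have : s * δ = (dp f hf x : ℝ) * δ := by
    have := e1.symm.trans e2
    simpa using this
  exact mul_right_cancel₀ (ne_of_gt hδpos) this

lemma left_slope_eq (f : TropPoly 1) (hf) (x : ℝ) {s : ℝ} {ε : ℝ} (hε : 0 < ε)
    (h : ∀ y, x - ε ≤ y → y ≤ x → ev f hf y = ev f hf x + s * (y - x)) :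
    s = (dm f hf x : ℝ) := by
  obtain ⟨ε2, hε2, h2⟩ := left_affine f hf x
  set δ := min ε ε2 with hδ
  have hδpos : 0 < δ := lt_min hε hε2
  have e1 := h (x - δ) (by have h5 := min_le_left ε ε2; rw [hδ]; linarith) (by linarith)
  have e2 := h2 (x - δ) (by have h5 := min_le_right ε ε2; rw [hδ]; linarith) (by linarith)
  have h3 : s * (-δ) = (dm f hf x : ℝ) * (-δ) := by
    have := e1.symm.trans e2
    have h4 : s * (x - δ - x) = (dm f hf x : ℝ) * (x - δ - x) := by linarith
    simpa using h4
  exact mul_right_cancel₀ (by simpa using ne_of_gt hδpos) h3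

/-- on the interior of an affine piece, the right slope equals the slope of the piece -/
lemma dp_eq_of_affine (f : TropPoly 1) (hf) {x y : ℝ} {s : ℝ}
    (h : ∀ z, x ≤ z → z ≤ y → ev f hf z = ev f hf x + s * (z - x)) :
    ∀ z, x ≤ z → z < y → (dp f hf z : ℝ) = s := by
  intro z hxz hzy
  refine (right_slope_eq f hf z (ε := y - z) (by linarith) ?_).symm
  intro w hzw hwy
  have e1 := h w (by linarith) (by linarith)
  have e2 := h z hxz (le_of_lt hzy)
  rw [e1, e2]; ring

lemma dm_eq_of_affine (f : TropPoly 1) (hf) {x y : ℝ} {s : ℝ}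
    (h : ∀ z, x ≤ z → z ≤ y → ev f hf z = ev f hf x + s * (z - x)) :
    ∀ z, x < z → z ≤ y → (dm f hf z : ℝ) = s := by
  intro z hxz hzy
  refine (left_slope_eq f hf z (ε := z - x) (by linarith) ?_).symm
  intro w hxw hwz
  have e1 := h w (by linarith) (by linarith)
  have e2 := h z (le_of_lt hxz) hzy
  rw [e1, e2]; ring

/-- the function `f - relu(x - x₀)` -/
noncomputable def Hq (f : TropPoly 1) (hf : f.support.Nonempty) (x₀ : ℝ) : ℝ → ℝ :=
  fun x => ev f hf x - max 0 (x - x₀)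

/-- the tropical quotient of `f` by `relu(x-x₀)` -/
noncomputable def quot (f : TropPoly 1) (hf : f.support.Nonempty) (x₀ : ℝ) : TropPoly 1 where
  support := (Finset.Icc (lo f hf) (hi f hf - 1)).image fun k => fun _ => k
  coeff := fun i => - sSup (Set.range fun x : ℝ => (i 0 : ℝ) * x - Hq f hf x₀ x)

section Quot

variable (f : TropPoly 1) (hf : f.support.Nonempty) (x₀ : ℝ)

lemma quot_support_eq :
    (quot f hf x₀).support.image (fun i => i 0) = Finset.Icc (lo f hf) (hi f hf - 1) := by
  simp only [quot]
  rw [Finset.image_image]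
  have : ((fun i : Fin 1 → ℤ => i 0) ∘ fun k : ℤ => fun _ : Fin 1 => k) = id := rfl
  rw [this, Finset.image_id]

lemma quot_nonempty (hk : dm f hf x₀ < dp f hf x₀) : (quot f hf x₀).support.Nonempty := by
  simp only [quot]
  apply Finset.Nonempty.image
  rw [Finset.nonempty_Icc]
  have h1 := lo_le_dm f hf x₀
  have h2 := dp_le_hi f hf x₀
  omega

lemma quot_bddAbove {k : ℤ} (hk1 : lo f hf ≤ k) (hk2 : k ≤ hi f hf - 1) :
    BddAbove (Set.range fun x : ℝ => (k : ℝ) * x - Hq f hf x₀ x) := by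
  obtain ⟨a, ha, ha0⟩ := exists_lo f hf
  obtain ⟨b, hb, hb0⟩ := exists_hi f hf
  set B1 : ℝ := ((k : ℝ) - lo f hf) * x₀ - f.coeff a with hB1
  set B2 : ℝ := ((k : ℝ) + 1 - hi f hf) * x₀ - f.coeff b - x₀ with hB2
  refine ⟨max B1 B2, ?_⟩
  rintro z ⟨x, rfl⟩
  have hea := term_le_ev f hf ha x
  have heb := term_le_ev f hf hb x
  rw [ha0] at hea; rw [hb0] at heb
  rcases le_total x x₀ with hx | hx
  · have hrelu : max 0 (x - x₀) = 0 := max_eq_left (by linarith)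
    have hkl : (0 : ℝ) ≤ (k : ℝ) - lo f hf := by
      have : (lo f hf : ℝ) ≤ (k : ℝ) := by exact_mod_cast hk1
      linarith
    have : ((k : ℝ) - lo f hf) * x ≤ ((k : ℝ) - lo f hf) * x₀ :=
      mul_le_mul_of_nonneg_left hx hkl
    refine le_trans ?_ (le_max_left B1 B2)
    simp only [Hq]; rw [hrelu, hB1]; nlinarith
  · have hrelu : max 0 (x - x₀) = x - x₀ := max_eq_right (by linarith)
    have hkh : (k : ℝ) + 1 - hi f hf ≤ 0 := by
      have : (k : ℝ) ≤ (hi f hf : ℝ) - 1 := by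
        have : (k : ℝ) ≤ ((hi f hf - 1 : ℤ) : ℝ) := by exact_mod_cast hk2
        push_cast at this; linarith
      linarith
    have : ((k : ℝ) + 1 - hi f hf) * x ≤ ((k : ℝ) + 1 - hi f hf) * x₀ :=
      mul_le_mul_of_nonpos_left hx hkh
    refine le_trans ?_ (le_max_right B1 B2)
    simp only [Hq]; rw [hrelu, hB2]; nlinarith

/-- existence of integer subgradients for `Hq` within the truncated range -/
lemma quot_subgradient (hk : dm f hf x₀ < dp f hf x₀) (x : ℝ) :
    ∃ k : ℤ, lo f hf ≤ k ∧ k ≤ hi f hf - 1 ∧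
      ∀ y, Hq f hf x₀ x + (k : ℝ) * (y - x) ≤ Hq f hf x₀ y := by
  set p := dm f hf x₀ with hp
  set q := dp f hf x₀ with hq
  obtain ⟨ip, hip, hip0⟩ := exists_dm f hf x₀
  obtain ⟨iq, hiq, hiq0⟩ := exists_dp f hf x₀
  have hpq : p + 1 ≤ q := hk
  have hploq : lo f hf ≤ p := lo_le_dm f hf x₀
  have hqhi : q ≤ hi f hf := dp_le_hi f hf x₀
  rcases le_or_gt x x₀ with hx | hx
  · -- x ≤ x₀ : use k = dm f hf x
    obtain ⟨j, hj, hj0⟩ := exists_dm f hf x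
    refine ⟨dm f hf x, lo_le_dm f hf x, ?_, ?_⟩
    · have hdmp : dm f hf x ≤ p := by
        rcases eq_or_lt_of_le hx with h | h
        · rw [hp, h]
        · exact le_trans (dm_le_dp f hf x) (dp_le_dm_of_lt f hf h)
      omega
    · intro y
      have hjy := support_line hj y
      have hjx₀ := support_line hj x₀
      have hqy := support_line hiq y
      rw [hj0] at hjy hjx₀
      rw [hiq0] at hqy
      have hx0 : max 0 (x - x₀) = 0 := max_eq_left (by linarith)
      rcases le_or_gt y x₀ with hy | hy
      · have hy0 : max 0 (y - x₀) = 0 := max_eq_left (by linarith)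
        simp only [Hq]; rw [hx0, hy0]; linarith
      · have hy0 : max 0 (y - x₀) = y - x₀ := max_eq_right (by linarith)
        simp only [Hq]; rw [hx0, hy0]
        have hkq : (dm f hf x : ℝ) ≤ (q : ℝ) - 1 := by
          have hdmp : dm f hf x ≤ p := by
            rcases eq_or_lt_of_le hx with h | h
            · rw [hp, h]
            · exact le_trans (dm_le_dp f hf x) (dp_le_dm_of_lt f hf h)
          have h' : dm f hf x ≤ q - 1 := by omega
          have h'' : ((dm f hf x : ℤ) : ℝ) ≤ ((q - 1 : ℤ) : ℝ) := by exact_mod_cast h'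
          push_cast at h''; linarith
        nlinarith [sub_pos.2 hy]
  · -- x > x₀ : use k = dm f hf x - 1
    obtain ⟨j, hj, hj0⟩ := exists_dm f hf x
    have hqm : q ≤ dm f hf x := dp_le_dm_of_lt f hf hx
    refine ⟨dm f hf x - 1, by omega, by have := le_hi hf (act_subset f hf x hj); omega, ?_⟩
    intro y
    have hjy := support_line hj y
    have hjx₀ := support_line hj x₀
    have hpy := support_line hip y
    rw [hj0] at hjy hjx₀
    rw [hip0] at hpy
    have hx0 : max 0 (x - x₀) = x - x₀ := max_eq_right (by linarith)
    rcases le_or_gt x₀ y with hy | hy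
    · have hy0 : max 0 (y - x₀) = y - x₀ := max_eq_right (by linarith)
      simp only [Hq]; rw [hx0, hy0]
      push_cast
      nlinarith
    · have hy0 : max 0 (y - x₀) = 0 := max_eq_left (by linarith)
      simp only [Hq]; rw [hx0, hy0]
      have hpm : (p : ℝ) ≤ (dm f hf x : ℝ) - 1 := by
        have h' : p ≤ dm f hf x - 1 := by omega
        have h'' : ((p : ℤ) : ℝ) ≤ ((dm f hf x - 1 : ℤ) : ℝ) := by exact_mod_cast h'
        push_cast at h''; linarith
      push_cast
      nlinarith [sub_pos.2 hy]

lemma quot_ev (hk : dm f hf x₀ < dp f hf x₀) (x : ℝ) :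
    ev (quot f hf x₀) (quot_nonempty f hf x₀ hk) x = Hq f hf x₀ x := by
  set Q := quot f hf x₀ with hQ
  have hmem : ∀ i ∈ Q.support, lo f hf ≤ i 0 ∧ i 0 ≤ hi f hf - 1 := by
    intro i hi
    simp only [hQ, quot, Finset.mem_image] at hi
    obtain ⟨k, hk', rfl⟩ := hi
    rw [Finset.mem_Icc] at hk'
    exact hk'
  apply le_antisymm
  · apply Finset.sup'_le
    intro i hi
    obtain ⟨h1, h2⟩ := hmem i hi
    have hbdd := quot_bddAbove f hf x₀ h1 h2
    have hle : (i 0 : ℝ) * x - Hq f hf x₀ x ≤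
        sSup (Set.range fun x : ℝ => (i 0 : ℝ) * x - Hq f hf x₀ x) :=
      le_csSup hbdd ⟨x, rfl⟩
    have hco : Q.coeff i = - sSup (Set.range fun x : ℝ => (i 0 : ℝ) * x - Hq f hf x₀ x) := by
      simp only [hQ, quot]
    rw [hco]; linarith
  · obtain ⟨k, hk1, hk2, hsub⟩ := quot_subgradient f hf x₀ hk x
    have hik : (fun _ : Fin 1 => k) ∈ Q.support := by
      simp only [hQ, quot]
      exact Finset.mem_image_of_mem _ (Finset.mem_Icc.2 ⟨hk1, hk2⟩)
    have hsup : sSup (Set.range fun y : ℝ => (k : ℝ) * y - Hq f hf x₀ y)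
        = (k : ℝ) * x - Hq f hf x₀ x := by
      apply le_antisymm
      · apply csSup_le (Set.range_nonempty _)
        rintro z ⟨y, rfl⟩
        show (k : ℝ) * y - Hq f hf x₀ y ≤ (k : ℝ) * x - Hq f hf x₀ x
        have := hsub y
        nlinarith
      · exact le_csSup (quot_bddAbove f hf x₀ hk1 hk2) ⟨x, rfl⟩
    have := term_le_ev Q (quot_nonempty f hf x₀ hk) hik x
    have hterm : Q.coeff (fun _ : Fin 1 => k) + ((k : ℝ)) * x = Hq f hf x₀ x := by
      have hco : Q.coeff (fun _ : Fin 1 => k)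
          = - sSup (Set.range fun y : ℝ => (k : ℝ) * y - Hq f hf x₀ y) := by
        simp only [hQ, quot]
      rw [hco, hsup]; ring
    calc Hq f hf x₀ x = Q.coeff (fun _ : Fin 1 => k) + ((k : ℝ)) * x := hterm.symm
      _ ≤ _ := term_le_ev Q (quot_nonempty f hf x₀ hk) hik x

lemma quot_lo (hk : dm f hf x₀ < dp f hf x₀) : lo (quot f hf x₀) (quot_nonempty f hf x₀ hk) = lo f hf := by
  have hI : (Finset.Icc (lo f hf) (hi f hf - 1)).Nonempty := by
    rw [Finset.nonempty_Icc]
    have h1 := lo_le_dm f hf x₀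
    have h2 := dp_le_hi f hf x₀
    omega
  rw [lo]
  apply le_antisymm
  · apply Finset.min'_le
    rw [quot_support_eq]
    rw [Finset.mem_Icc]
    constructor
    · exact le_refl _
    · have h1 := lo_le_dm f hf x₀
      have h2 := dp_le_hi f hf x₀
      omega
  · apply Finset.le_min'
    intro y hy
    rw [quot_support_eq, Finset.mem_Icc] at hy
    exact hy.1

lemma quot_hi (hk : dm f hf x₀ < dp f hf x₀) : hi (quot f hf x₀) (quot_nonempty f hf x₀ hk) = hi f hf - 1 := by
  rw [hi]
  apply le_antisymm
  · apply Finset.max'_le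
    intro y hy
    rw [quot_support_eq, Finset.mem_Icc] at hy
    exact hy.2
  · apply Finset.le_max'
    rw [quot_support_eq, Finset.mem_Icc]
    constructor
    · have h1 := lo_le_dm f hf x₀
      have h2 := dp_le_hi f hf x₀
      omega
    · exact le_refl _

end Quot

section Vol

lemma newt_seg (f : TropPoly 1) (hf : f.support.Nonempty) :
    Newt f = convexHull ℝ
      ({(fun _ : Fin 1 => ((lo f hf : ℤ) : ℝ)), (fun _ : Fin 1 => ((hi f hf : ℤ) : ℝ))} :
        Set (Fin 1 → ℝ)) := by
  set A : ℝ := ((lo f hf : ℤ) : ℝ) with hA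
  set B : ℝ := ((hi f hf : ℤ) : ℝ) with hB
  rw [Newt]
  apply Set.Subset.antisymm
  · apply convexHull_min ?_ (convex_convexHull ℝ _)
    rintro v ⟨i, hi', rfl⟩
    have hmem : i ∈ f.support := hi'
    have h1 : A ≤ ((i 0 : ℤ) : ℝ) := by rw [hA]; exact_mod_cast lo_le hf hmem
    have h2 : ((i 0 : ℤ) : ℝ) ≤ B := by rw [hB]; exact_mod_cast le_hi hf hmem
    have hexp : expR i = fun _ : Fin 1 => ((i 0 : ℤ) : ℝ) := by
      funext j
      have : j = 0 := Subsingleton.elim j 0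
      rw [expR, this]
    rw [convexHull_pair, hexp]
    rcases eq_or_lt_of_le (h1.trans h2) with hAB | hAB
    · have hu : ((i 0 : ℤ) : ℝ) = A := le_antisymm (hAB ▸ h2) h1
      exact ⟨1, 0, zero_le_one, le_refl 0, by ring, by
        funext j; simp [hu]⟩
    · refine ⟨(B - (i 0 : ℤ)) / (B - A), (((i 0 : ℤ) : ℝ) - A) / (B - A),
        div_nonneg (by linarith) (by linarith), div_nonneg (by linarith) (by linarith),
        by
          have hne : B - A ≠ 0 := by linarith
          field_simp
          ring, ?_⟩
      funext j
      have hBA : B - A ≠ 0 := by linarith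
      simp only [Pi.add_apply, Pi.smul_apply, smul_eq_mul]
      field_simp
      ring
  · apply convexHull_min ?_ (convex_convexHull ℝ _)
    rw [Set.insert_subset_iff]
    constructor
    · obtain ⟨a, ha, ha0⟩ := exists_lo f hf
      apply subset_convexHull
      refine ⟨a, ha, ?_⟩
      funext j
      have : j = 0 := Subsingleton.elim j 0
      rw [expR, this, ha0]
    · rw [Set.singleton_subset_iff]
      obtain ⟨b, hb, hb0⟩ := exists_hi f hf
      apply subset_convexHull
      refine ⟨b, hb, ?_⟩
      funext j
      have : j = 0 := Subsingleton.elim j 0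
      rw [expR, this, hb0]

/-- add a fixed last coordinate, as an affine map -/
noncomputable def snocMap (c : ℝ) : (Fin 1 → ℝ) →ᵃ[ℝ] (Fin 2 → ℝ) where
  toFun := fun v => ![v 0, c]
  linear :=
  { toFun := fun v => ![v 0, 0]
    map_add' := fun v w => by funext j; fin_cases j <;> simp
    map_smul' := fun r v => by funext j; fin_cases j <;> simp }
  map_vadd' := fun p v => by funext j; fin_cases j <;> simp

lemma snoc_eq (c : ℝ) : (fun v : Fin 1 → ℝ => Fin.snoc v c) = ⇑(snocMap c) := by
  funext v j
  have hco : (snocMap c) v = ![v 0, c] := rfl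
  rw [hco]
  fin_cases j
  · simp [Fin.snoc]
  · simp [Fin.snoc]

lemma pair_eq (f g : TropPoly 1) (hf : f.support.Nonempty) (hg : g.support.Nonempty) :
    pairPolytope f g = convexHull ℝ
      ({![((lo f hf : ℤ) : ℝ), 0], ![((hi f hf : ℤ) : ℝ), 0],
        ![((lo g hg : ℤ) : ℝ), 1], ![((hi g hg : ℤ) : ℝ), 1]} : Set (Fin 2 → ℝ)) := by
  rw [pairPolytope, snoc_eq 0, snoc_eq 1, newt_seg f hf, newt_seg g hg,
    AffineMap.image_convexHull, AffineMap.image_convexHull,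
    convexHull_convexHull_union_left, convexHull_convexHull_union_right,
    Set.image_pair, Set.image_pair]
  congr 1
  have e1 : (snocMap 0) (fun _ : Fin 1 => ((lo f hf : ℤ) : ℝ)) = ![((lo f hf : ℤ) : ℝ), 0] := rfl
  have e2 : (snocMap 0) (fun _ : Fin 1 => ((hi f hf : ℤ) : ℝ)) = ![((hi f hf : ℤ) : ℝ), 0] := rfl
  have e3 : (snocMap 1) (fun _ : Fin 1 => ((lo g hg : ℤ) : ℝ)) = ![((lo g hg : ℤ) : ℝ), 1] := rfl
  have e4 : (snocMap 1) (fun _ : Fin 1 => ((hi g hg : ℤ) : ℝ)) = ![((hi g hg : ℤ) : ℝ), 1] := rfl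
  rw [e1, e2, e3, e4]
  ext p
  simp only [Set.mem_union, Set.mem_insert_iff, Set.mem_singleton_iff]
  tauto

/-- the trapezoid -/
def Tset (A B C D : ℝ) : Set (Fin 2 → ℝ) :=
  {p | 0 ≤ p 1 ∧ p 1 ≤ 1 ∧ A + (C - A) * p 1 ≤ p 0 ∧ p 0 ≤ B + (D - B) * p 1}

lemma hull_eq_T (A B C D : ℝ) (hAB : A ≤ B) (hCD : C ≤ D) :
    convexHull ℝ ({![A, 0], ![B, 0], ![C, 1], ![D, 1]} : Set (Fin 2 → ℝ)) = Tset A B C D := by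
  apply Set.Subset.antisymm
  · apply convexHull_min ?_ ?_
    · rintro p hp
      simp only [Set.mem_insert_iff, Set.mem_singleton_iff] at hp
      rcases hp with rfl | rfl | rfl | rfl <;>
        refine ⟨by norm_num, by norm_num, by norm_num <;> nlinarith, by norm_num <;> nlinarith⟩
    · rintro p hp q hq a b ha hb hab
      obtain ⟨hp0, hp1, hpL, hpR⟩ := hp
      obtain ⟨hq0, hq1, hqL, hqR⟩ := hq
      have h1 : (a • p + b • q) 1 = a * p 1 + b * q 1 := rfl
      have h0 : (a • p + b • q) 0 = a * p 0 + b * q 0 := rfl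
      have habA : a * A + b * A = A := by rw [← add_mul, hab, one_mul]
      have habB : a * B + b * B = B := by rw [← add_mul, hab, one_mul]
      refine ⟨by rw [h1]; nlinarith [mul_nonneg ha hp0, mul_nonneg hb hq0],
        by rw [h1]; nlinarith [mul_le_mul_of_nonneg_left hp1 ha, mul_le_mul_of_nonneg_left hq1 hb],
        ?_, ?_⟩
      · rw [h0, h1]
        nlinarith [mul_le_mul_of_nonneg_left hpL ha, mul_le_mul_of_nonneg_left hqL hb, habA]
      · rw [h0, h1]
        nlinarith [mul_le_mul_of_nonneg_left hpR ha, mul_le_mul_of_nonneg_left hqR hb, habB]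
  · rintro p ⟨h0, h1, hL, hR⟩
    set t := p 1 with htdef
    have key : ∃ s : ℝ, 0 ≤ s ∧ s ≤ 1 ∧
        (1 - t) * (A + s * (B - A)) + t * (C + s * (D - C)) = p 0 := by
      set L := A + (C - A) * t with hLdef
      set R := B + (D - B) * t with hRdef
      have hRL : 0 ≤ R - L := by rw [hLdef, hRdef]; nlinarith
      rcases eq_or_lt_of_le hRL with hE | hE
      · refine ⟨0, le_refl 0, zero_le_one, ?_⟩
        have : p 0 = L := by rw [hLdef]; nlinarith [hL, hR]
        rw [this, hLdef]; ring
      · refine ⟨(p 0 - L) / (R - L), div_nonneg (by linarith) (by linarith),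
          (div_le_one (by linarith)).2 (by linarith), ?_⟩
        have hexp : (1 - t) * (A + ((p 0 - L) / (R - L)) * (B - A))
            + t * (C + ((p 0 - L) / (R - L)) * (D - C))
            = L + ((p 0 - L) / (R - L)) * (R - L) := by
          rw [hLdef, hRdef]; ring
        rw [hexp]
        field_simp
        ring
    obtain ⟨s, hs0, hs1, hsum⟩ := key
    set q0 : Fin 2 → ℝ := ![A + s * (B - A), 0] with hq0def
    set q1 : Fin 2 → ℝ := ![C + s * (D - C), 1] with hq1def
    have hq0 : q0 ∈ convexHull ℝ ({![A, 0], ![B, 0], ![C, 1], ![D, 1]} : Set (Fin 2 → ℝ)) := by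
      have hseg := segment_subset_convexHull (𝕜 := ℝ) (x := ![A, 0]) (y := ![B, 0])
        (s := ({![A, 0], ![B, 0], ![C, 1], ![D, 1]} : Set (Fin 2 → ℝ))) (by simp) (by simp)
      apply hseg
      refine ⟨1 - s, s, by linarith, hs0, by ring, ?_⟩
      funext j
      fin_cases j <;> simp [hq0def] <;> ring
    have hq1 : q1 ∈ convexHull ℝ ({![A, 0], ![B, 0], ![C, 1], ![D, 1]} : Set (Fin 2 → ℝ)) := by
      have hseg := segment_subset_convexHull (𝕜 := ℝ) (x := ![C, 1]) (y := ![D, 1])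
        (s := ({![A, 0], ![B, 0], ![C, 1], ![D, 1]} : Set (Fin 2 → ℝ))) (by simp) (by simp)
      apply hseg
      refine ⟨1 - s, s, by linarith, hs0, by ring, ?_⟩
      funext j
      fin_cases j <;> simp [hq1def] <;> ring
    have hcomb := (convex_convexHull ℝ
      ({![A, 0], ![B, 0], ![C, 1], ![D, 1]} : Set (Fin 2 → ℝ))) hq0 hq1
      (by linarith : (0:ℝ) ≤ 1 - t) h0 (by ring)
    have hpe : p = (1 - t) • q0 + t • q1 := by
      funext j
      fin_cases j
      · simp only [Fin.zero_eta, Pi.add_apply, Pi.smul_apply, smul_eq_mul, hq0def, hq1def,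
          Matrix.cons_val_zero]
        linarith [hsum]
      · simp only [Fin.mk_one, Pi.add_apply, Pi.smul_apply, smul_eq_mul, hq0def, hq1def,
          Matrix.cons_val_one, Matrix.head_cons, Matrix.cons_val_zero]
        rw [htdef]; ring
    rw [hpe]
    exact hcomb

end Vol

section VolMeasure

open MeasureTheory

lemma T3_measurable (A B C D : ℝ) :
    MeasurableSet {q : ℝ × ℝ | 0 ≤ q.1 ∧ q.1 ≤ 1 ∧ A + (C - A) * q.1 ≤ q.2 ∧
      q.2 ≤ B + (D - B) * q.1} := by
  apply MeasurableSet.inter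
  · exact measurableSet_le measurable_const measurable_fst
  apply MeasurableSet.inter
  · exact measurableSet_le measurable_fst measurable_const
  apply MeasurableSet.inter
  · exact measurableSet_le (measurable_const.add (measurable_fst.const_mul _)) measurable_snd
  · exact measurableSet_le measurable_snd (measurable_const.add (measurable_fst.const_mul _))

lemma volume_T (A B C D : ℝ) (hAB : A ≤ B) (hCD : C ≤ D) :
    volume (Tset A B C D) = ENNReal.ofReal (((B - A) + (D - C)) / 2) := by
  set T3 : Set (ℝ × ℝ) := {q : ℝ × ℝ | 0 ≤ q.1 ∧ q.1 ≤ 1 ∧ A + (C - A) * q.1 ≤ q.2 ∧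
      q.2 ≤ B + (D - B) * q.1} with hT3
  have hT3m : MeasurableSet T3 := T3_measurable A B C D
  have hpre : Tset A B C D =
      (MeasurableEquiv.finTwoArrow : (Fin 2 → ℝ) ≃ᵐ ℝ × ℝ) ⁻¹' (Prod.swap ⁻¹' T3) := rfl
  have hswapm : MeasurableSet (Prod.swap ⁻¹' T3 : Set (ℝ × ℝ)) :=
    hT3m.preimage measurable_swap
  rw [hpre, (volume_preserving_finTwoArrow ℝ).measure_preimage hswapm.nullMeasurableSet]
  have hswap : volume (Prod.swap ⁻¹' T3 : Set (ℝ × ℝ)) = volume T3 := by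
    rw [MeasureTheory.Measure.volume_eq_prod]
    exact Measure.measurePreserving_swap.measure_preimage hT3m.nullMeasurableSet
  rw [hswap, MeasureTheory.Measure.volume_eq_prod, Measure.prod_apply hT3m]
  have hslice : ∀ t : ℝ, volume (Prod.mk t ⁻¹' T3) =
      Set.indicator (Set.Icc (0:ℝ) 1)
        (fun t => ENNReal.ofReal ((B + (D - B) * t) - (A + (C - A) * t))) t := by
    intro t
    by_cases ht : t ∈ Set.Icc (0:ℝ) 1
    · rw [Set.indicator_of_mem ht]
      have hset : Prod.mk t ⁻¹' T3 = Set.Icc (A + (C - A) * t) (B + (D - B) * t) := by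
        ext x
        simp only [hT3, Set.mem_preimage, Set.mem_setOf_eq, Set.mem_Icc]
        constructor
        · rintro ⟨-, -, h3, h4⟩; exact ⟨h3, h4⟩
        · rintro ⟨h3, h4⟩; exact ⟨ht.1, ht.2, h3, h4⟩
      rw [hset, Real.volume_Icc]
    · rw [Set.indicator_of_notMem ht]
      have hset : Prod.mk t ⁻¹' T3 = ∅ := by
        ext x
        simp only [hT3, Set.mem_preimage, Set.mem_setOf_eq, Set.mem_empty_iff_false,
          iff_false, not_and]
        intro h1 h2
        exact absurd ⟨h1, h2⟩ ht
      rw [hset]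
      simp
  rw [lintegral_congr hslice, lintegral_indicator measurableSet_Icc]
  have hInt : IntegrableOn (fun t : ℝ => (B + (D - B) * t) - (A + (C - A) * t))
      (Set.Icc (0:ℝ) 1) := by
    apply Continuous.integrableOn_Icc
    continuity
  have hnn : 0 ≤ᵐ[volume.restrict (Set.Icc (0:ℝ) 1)]
      fun t : ℝ => (B + (D - B) * t) - (A + (C - A) * t) := by
    filter_upwards [ae_restrict_mem measurableSet_Icc] with t ht
    have h1 := ht.1
    have h2 := ht.2
    show (0:ℝ) ≤ B + (D - B) * t - (A + (C - A) * t)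
    nlinarith
  rw [← ofReal_integral_eq_lintegral_ofReal hInt hnn]
  congr 1
  have hfun : (fun t : ℝ => (B + (D - B) * t) - (A + (C - A) * t))
      = fun t : ℝ => (B - A) + ((D - C) - (B - A)) * t := by
    funext t; ring
  rw [hfun, MeasureTheory.integral_Icc_eq_integral_Ioc,
    ← intervalIntegral.integral_of_le zero_le_one]
  have hint2 : IntervalIntegrable (fun t : ℝ => ((D - C) - (B - A)) * t) volume 0 1 :=
    (continuous_const.mul continuous_id).intervalIntegrable 0 1
  rw [intervalIntegral.integral_add intervalIntegrable_const hint2]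
  rw [intervalIntegral.integral_const, intervalIntegral.integral_const_mul]
  rw [integral_id]
  simp
  ring

lemma span_top (A B C D : ℝ) (hpos : A < B ∨ C < D) :
    affineSpan ℝ (convexHull ℝ
      ({![A, 0], ![B, 0], ![C, 1], ![D, 1]} : Set (Fin 2 → ℝ))) = ⊤ := by
  rw [affineSpan_convexHull]
  set pts : Set (Fin 2 → ℝ) := {![A, 0], ![B, 0], ![C, 1], ![D, 1]} with hpts
  have m0 : ![A, 0] ∈ pts := by simp [hpts]
  have m1 : ![B, 0] ∈ pts := by simp [hpts]
  have m2 : ![C, 1] ∈ pts := by simp [hpts]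
  have m3 : ![D, 1] ∈ pts := by simp [hpts]
  rcases hpos with h | h
  · have hP0 : ![A, 0] ∈ affineSpan ℝ pts := subset_affineSpan ℝ pts m0
    rw [eq_top_iff]
    rintro p -
    rw [← AffineSubspace.vsub_right_mem_direction_iff_mem hP0,
      direction_affineSpan]
    have hv1 : (![B, 0] -ᵥ ![A, 0] : Fin 2 → ℝ) ∈ vectorSpan ℝ pts :=
      vsub_mem_vectorSpan ℝ m1 m0
    have hw : (![C, 1] -ᵥ ![A, 0] : Fin 2 → ℝ) ∈ vectorSpan ℝ pts :=
      vsub_mem_vectorSpan ℝ m2 m0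
    have hd : p -ᵥ ![A, 0] = ((p 0 - A - (p 1) * (C - A)) / (B - A)) •
        (![B, 0] -ᵥ ![A, 0] : Fin 2 → ℝ) + (p 1) • (![C, 1] -ᵥ ![A, 0] : Fin 2 → ℝ) := by
      have hBA : B - A ≠ 0 := by linarith
      funext j
      fin_cases j
      · simp only [Fin.zero_eta, Pi.add_apply, Pi.smul_apply, smul_eq_mul, vsub_eq_sub, Pi.sub_apply, Matrix.cons_val_zero]
        field_simp
        try ring
      · simp only [Fin.mk_one, Pi.add_apply, Pi.smul_apply, smul_eq_mul, vsub_eq_sub, Pi.sub_apply, Matrix.cons_val_one, Matrix.head_cons, Matrix.cons_val_zero]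
        ring
    rw [hd]
    exact Submodule.add_mem _ (Submodule.smul_mem _ _ hv1) (Submodule.smul_mem _ _ hw)
  · have hP2 : ![C, 1] ∈ affineSpan ℝ pts := subset_affineSpan ℝ pts m2
    rw [eq_top_iff]
    rintro p -
    rw [← AffineSubspace.vsub_right_mem_direction_iff_mem hP2,
      direction_affineSpan]
    have hv1 : (![D, 1] -ᵥ ![C, 1] : Fin 2 → ℝ) ∈ vectorSpan ℝ pts :=
      vsub_mem_vectorSpan ℝ m3 m2
    have hw : (![A, 0] -ᵥ ![C, 1] : Fin 2 → ℝ) ∈ vectorSpan ℝ pts :=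
      vsub_mem_vectorSpan ℝ m0 m2
    have hd : p -ᵥ ![C, 1] = ((p 0 - C - (1 - p 1) * (A - C)) / (D - C)) •
        (![D, 1] -ᵥ ![C, 1] : Fin 2 → ℝ) + (1 - p 1) • (![A, 0] -ᵥ ![C, 1] : Fin 2 → ℝ) := by
      have hDC : D - C ≠ 0 := by linarith
      funext j
      fin_cases j
      · simp only [Fin.zero_eta, Pi.add_apply, Pi.smul_apply, smul_eq_mul, vsub_eq_sub, Pi.sub_apply, Matrix.cons_val_zero]
        field_simp
        try ring
      · simp only [Fin.mk_one, Pi.add_apply, Pi.smul_apply, smul_eq_mul, vsub_eq_sub, Pi.sub_apply, Matrix.cons_val_one, Matrix.head_cons, Matrix.cons_val_zero]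
        ring
    rw [hd]
    exact Submodule.add_mem _ (Submodule.smul_mem _ _ hv1) (Submodule.smul_mem _ _ hw)

lemma vol_eq (f g : TropPoly 1) (hf : f.support.Nonempty) (hg : g.support.Nonempty) :
    vol f g = (((hi f hf : ℝ) - (lo f hf : ℝ)) + ((hi g hg : ℝ) - (lo g hg : ℝ))) / 2 := by
  have hAB : ((lo f hf : ℤ) : ℝ) ≤ ((hi f hf : ℤ) : ℝ) := by exact_mod_cast lo_le_hi f hf
  have hCD : ((lo g hg : ℤ) : ℝ) ≤ ((hi g hg : ℤ) : ℝ) := by exact_mod_cast lo_le_hi g hg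
  rw [TropPoly.vol]
  split_ifs with h
  · rw [pair_eq f g hf hg, hull_eq_T _ _ _ _ hAB hCD, volume_T _ _ _ _ hAB hCD]
    rw [ENNReal.toReal_ofReal (by linarith)]
  · have hno : ¬(((lo f hf : ℤ) : ℝ) < ((hi f hf : ℤ) : ℝ) ∨
        ((lo g hg : ℤ) : ℝ) < ((hi g hg : ℤ) : ℝ)) := by
      intro hpos
      apply h
      rw [pair_eq f g hf hg]
      exact span_top _ _ _ _ hpos
    push_neg at hno
    have h1 : ((hi f hf : ℤ) : ℝ) = ((lo f hf : ℤ) : ℝ) := le_antisymm hno.1 hAB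
    have h2 : ((hi g hg : ℤ) : ℝ) = ((lo g hg : ℤ) : ℝ) := le_antisymm hno.2 hCD
    rw [h1, h2]
    ring

end VolMeasure

lemma real_heq (f g f' g' : TropPoly 1) (hf : f.support.Nonempty) (hg : g.support.Nonempty)
    (hf' : f'.support.Nonempty) (hg' : g'.support.Nonempty)
    (heq : ∀ x, tropDiv f g x = tropDiv f' g' x) :
    ∀ x : ℝ, ev f hf x - ev g hg x = ev f' hf' x - ev g' hg' x := by
  intro x
  have h := heq (fun _ => x)
  rw [tropDiv, tropDiv, eval_eq f hf, eval_eq g hg, eval_eq f' hf', eval_eq g' hg'] at h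
  rw [← EReal.coe_sub, ← EReal.coe_sub] at h
  exact_mod_cast h

lemma no_common_kink (f g : TropPoly 1) (hf : f.support.Nonempty) (hg : g.support.Nonempty)
    (hmin : ∀ f'' g'' : TropPoly 1, g''.support.Nonempty →
      (∀ x, TropPoly.tropDiv f'' g'' x = TropPoly.tropDiv f g x) →
      TropPoly.vol f g ≤ TropPoly.vol f'' g'')
    (x₀ : ℝ) (hkf : dm f hf x₀ < dp f hf x₀) (hkg : dm g hg x₀ < dp g hg x₀) : False := by
  set u := quot f hf x₀ with hu_def
  set v := quot g hg x₀ with hv_def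
  have hu : u.support.Nonempty := quot_nonempty f hf x₀ hkf
  have hv : v.support.Nonempty := quot_nonempty g hg x₀ hkg
  have hdiv : ∀ x : Fin 1 → ℝ, tropDiv u v x = tropDiv f g x := by
    intro x
    rw [tropDiv, tropDiv, eval_eq u hu, eval_eq v hv, eval_eq f hf, eval_eq g hg,
      ← EReal.coe_sub, ← EReal.coe_sub]
    norm_cast
    have h1 : ev u hu (x 0) = Hq f hf x₀ (x 0) := quot_ev f hf x₀ hkf (x 0)
    have h2 : ev v hv (x 0) = Hq g hg x₀ (x 0) := quot_ev g hg x₀ hkg (x 0)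
    rw [h1, h2, Hq, Hq]
    ring
  have hle := hmin u v hv hdiv
  have hvolfg := vol_eq f g hf hg
  have hvoluv := vol_eq u v hu hv
  rw [hvolfg] at hle
  rw [hvoluv] at hle
  rw [quot_lo f hf x₀ hkf, quot_hi f hf x₀ hkf, quot_lo g hg x₀ hkg, quot_hi g hg x₀ hkg] at hle
  push_cast at hle
  linarith

lemma slope_rel_dp (f g f' g' : TropPoly 1) (hf : f.support.Nonempty) (hg : g.support.Nonempty)
    (hf' : f'.support.Nonempty) (hg' : g'.support.Nonempty)
    (hreal : ∀ x : ℝ, ev f hf x - ev g hg x = ev f' hf' x - ev g' hg' x) (x : ℝ) :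
    dp f hf x + dp g' hg' x = dp f' hf' x + dp g hg x := by
  obtain ⟨e1, he1, H1⟩ := right_affine f hf x
  obtain ⟨e2, he2, H2⟩ := right_affine g hg x
  obtain ⟨e3, he3, H3⟩ := right_affine f' hf' x
  obtain ⟨e4, he4, H4⟩ := right_affine g' hg' x
  set δ := min (min e1 e2) (min e3 e4) with hδ
  have hδpos : 0 < δ := lt_min (lt_min he1 he2) (lt_min he3 he4)
  have h1 : δ ≤ e1 := le_trans (min_le_left _ _) (min_le_left _ _)
  have h2 : δ ≤ e2 := le_trans (min_le_left _ _) (min_le_right _ _)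
  have h3 : δ ≤ e3 := le_trans (min_le_right _ _) (min_le_left _ _)
  have h4 : δ ≤ e4 := le_trans (min_le_right _ _) (min_le_right _ _)
  set y := x + δ / 2 with hy
  have k1 := H1 y (by rw [hy]; linarith) (by rw [hy]; linarith)
  have k2 := H2 y (by rw [hy]; linarith) (by rw [hy]; linarith)
  have k3 := H3 y (by rw [hy]; linarith) (by rw [hy]; linarith)
  have k4 := H4 y (by rw [hy]; linarith) (by rw [hy]; linarith)
  have hx := hreal x
  have hyy := hreal y
  rw [k1, k2, k3, k4] at hyy
  have hyx : y - x = δ / 2 := by rw [hy]; ring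
  rw [hyx] at hyy
  have hcan : ((dp f hf x : ℝ) + (dp g' hg' x : ℝ)) * (δ / 2)
      = ((dp f' hf' x : ℝ) + (dp g hg x : ℝ)) * (δ / 2) := by ring_nf; ring_nf at hyy; linarith
  have := mul_right_cancel₀ (by positivity : (δ / 2 : ℝ) ≠ 0) hcan
  exact_mod_cast this

lemma slope_rel_dm (f g f' g' : TropPoly 1) (hf : f.support.Nonempty) (hg : g.support.Nonempty)
    (hf' : f'.support.Nonempty) (hg' : g'.support.Nonempty)
    (hreal : ∀ x : ℝ, ev f hf x - ev g hg x = ev f' hf' x - ev g' hg' x) (x : ℝ) :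
    dm f hf x + dm g' hg' x = dm f' hf' x + dm g hg x := by
  obtain ⟨e1, he1, H1⟩ := left_affine f hf x
  obtain ⟨e2, he2, H2⟩ := left_affine g hg x
  obtain ⟨e3, he3, H3⟩ := left_affine f' hf' x
  obtain ⟨e4, he4, H4⟩ := left_affine g' hg' x
  set δ := min (min e1 e2) (min e3 e4) with hδ
  have hδpos : 0 < δ := lt_min (lt_min he1 he2) (lt_min he3 he4)
  have h1 : δ ≤ e1 := le_trans (min_le_left _ _) (min_le_left _ _)
  have h2 : δ ≤ e2 := le_trans (min_le_left _ _) (min_le_right _ _)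
  have h3 : δ ≤ e3 := le_trans (min_le_right _ _) (min_le_left _ _)
  have h4 : δ ≤ e4 := le_trans (min_le_right _ _) (min_le_right _ _)
  set y := x - δ / 2 with hy
  have k1 := H1 y (by rw [hy]; linarith) (by rw [hy]; linarith)
  have k2 := H2 y (by rw [hy]; linarith) (by rw [hy]; linarith)
  have k3 := H3 y (by rw [hy]; linarith) (by rw [hy]; linarith)
  have k4 := H4 y (by rw [hy]; linarith) (by rw [hy]; linarith)
  have hx := hreal x
  have hyy := hreal y
  rw [k1, k2, k3, k4] at hyy
  have hyx : y - x = -(δ / 2) := by rw [hy]; ring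
  rw [hyx] at hyy
  have hcan : ((dm f hf x : ℝ) + (dm g' hg' x : ℝ)) * (δ / 2)
      = ((dm f' hf' x : ℝ) + (dm g hg x : ℝ)) * (δ / 2) := by ring_nf; ring_nf at hyy; linarith
  have := mul_right_cancel₀ (by positivity : (δ / 2 : ℝ) ≠ 0) hcan
  exact_mod_cast this

lemma locally_const {F : ℝ → ℝ}
    (h : ∀ x : ℝ, ∃ ε > 0, ∀ y, |y - x| ≤ ε → F y = F x) : ∀ x, F x = F 0 := by
  have hopen : IsOpen {y : ℝ | F y = F 0} := by
    rw [Metric.isOpen_iff]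
    intro y hy
    obtain ⟨ε, hε, hloc⟩ := h y
    refine ⟨ε, hε, fun z hz => ?_⟩
    rw [Metric.mem_ball, Real.dist_eq] at hz
    have := hloc z (le_of_lt hz)
    rw [Set.mem_setOf_eq] at hy ⊢
    rw [this, hy]
  have hclosed : IsClosed {y : ℝ | F y = F 0} := by
    rw [← isOpen_compl_iff, Metric.isOpen_iff]
    intro y hy
    obtain ⟨ε, hε, hloc⟩ := h y
    refine ⟨ε, hε, fun z hz => ?_⟩
    rw [Metric.mem_ball, Real.dist_eq] at hz
    have := hloc z (le_of_lt hz)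
    rw [Set.mem_compl_iff, Set.mem_setOf_eq] at hy ⊢
    rw [this]
    exact hy
  have hcl : IsClopen {y : ℝ | F y = F 0} := ⟨hclosed, hopen⟩
  rcases isClopen_iff.1 hcl with hemp | huniv
  · exfalso
    have : (0 : ℝ) ∈ {y : ℝ | F y = F 0} := rfl
    rw [hemp] at this
    exact this
  · intro x
    have : x ∈ {y : ℝ | F y = F 0} := by rw [huniv]; trivial
    exact this

end TP1

open TP1

/-- **Uniqueness (up to a tropical monomial) of the minimum volume expression in one
variable.** If `φ = f ⊘ g = f' ⊘ g'` are two minimum volume expressions of the same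
tropical rational function on `ℝ` with equal volumes, then `f'` and `g'` differ from `f`
and `g` by a common integer affine function `a + kx`; in particular the dual subdivision
of `f ⊕ (y ⊙ g)` is unique up to translation. -/
theorem min_vol_expression_unique (f g f' g' : TropPoly 1)
    (hf : f.support.Nonempty) (hg : g.support.Nonempty)
    (hf' : f'.support.Nonempty) (hg' : g'.support.Nonempty)
    (heq : ∀ x, TropPoly.tropDiv f g x = TropPoly.tropDiv f' g' x)
    (hmin : ∀ f'' g'' : TropPoly 1, g''.support.Nonempty →
      (∀ x, TropPoly.tropDiv f'' g'' x = TropPoly.tropDiv f g x) →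
      TropPoly.vol f g ≤ TropPoly.vol f'' g'')
    (hmin' : ∀ f'' g'' : TropPoly 1, g''.support.Nonempty →
      (∀ x, TropPoly.tropDiv f'' g'' x = TropPoly.tropDiv f g x) →
      TropPoly.vol f' g' ≤ TropPoly.vol f'' g'')
    (hvol : TropPoly.vol f g = TropPoly.vol f' g') :
    ∃ (a : ℝ) (k : ℤ),
      (∀ x : Fin 1 → ℝ, f'.eval x = f.eval x + ((a + (k : ℝ) * x 0 : ℝ) : EReal)) ∧
      (∀ x : Fin 1 → ℝ, g'.eval x = g.eval x + ((a + (k : ℝ) * x 0 : ℝ) : EReal)) := by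
  classical
  have hreal := real_heq f g f' g' hf hg hf' hg' heq
  have hKfg : ∀ x : ℝ, dp f hf x = dm f hf x ∨ dp g hg x = dm g hg x := by
    intro x
    by_contra hcon
    push_neg at hcon
    obtain ⟨h1, h2⟩ := hcon
    exact no_common_kink f g hf hg hmin x
      (lt_of_le_of_ne (dm_le_dp f hf x) (fun h => h1 h.symm))
      (lt_of_le_of_ne (dm_le_dp g hg x) (fun h => h2 h.symm))
  have hminB : ∀ f'' g'' : TropPoly 1, g''.support.Nonempty →
      (∀ x, TropPoly.tropDiv f'' g'' x = TropPoly.tropDiv f' g' x) →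
      TropPoly.vol f' g' ≤ TropPoly.vol f'' g'' := fun f'' g'' hne hdiv =>
    hmin' f'' g'' hne (fun x => (hdiv x).trans (heq x).symm)
  have hKfg' : ∀ x : ℝ, dp f' hf' x = dm f' hf' x ∨ dp g' hg' x = dm g' hg' x := by
    intro x
    by_contra hcon
    push_neg at hcon
    obtain ⟨h1, h2⟩ := hcon
    exact no_common_kink f' g' hf' hg' hminB x
      (lt_of_le_of_ne (dm_le_dp f' hf' x) (fun h => h1 h.symm))
      (lt_of_le_of_ne (dm_le_dp g' hg' x) (fun h => h2 h.symm))
  have hJ : ∀ x : ℝ, dp g hg x - dm g hg x = dp g' hg' x - dm g' hg' x := by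
    intro x
    have R1 := slope_rel_dp f g f' g' hf hg hf' hg' hreal x
    have R2 := slope_rel_dm f g f' g' hf hg hf' hg' hreal x
    have i1 := dm_le_dp f hf x
    have i2 := dm_le_dp g hg x
    have i3 := dm_le_dp f' hf' x
    have i4 := dm_le_dp g' hg' x
    rcases hKfg x with h | h <;> rcases hKfg' x with h' | h' <;> omega
  -- the common slope difference
  set k : ℤ := dp g' hg' 0 - dp g hg 0 with hkdef
  have hloc : ∀ x : ℝ, ∃ ε > 0, ∀ y, |y - x| ≤ ε →
      ((dp g' hg' y - dp g hg y : ℤ) : ℝ) = ((dp g' hg' x - dp g hg x : ℤ) : ℝ) := by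
    intro x
    obtain ⟨e2, he2, H2⟩ := right_affine g hg x
    obtain ⟨e4, he4, H4⟩ := right_affine g' hg' x
    obtain ⟨e2', he2', H2'⟩ := left_affine g hg x
    obtain ⟨e4', he4', H4'⟩ := left_affine g' hg' x
    set δ := min (min e2 e4) (min e2' e4') with hδ
    have hδpos : 0 < δ := lt_min (lt_min he2 he4) (lt_min he2' he4')
    have d2 : δ ≤ e2 := le_trans (min_le_left _ _) (min_le_left _ _)
    have d4 : δ ≤ e4 := le_trans (min_le_left _ _) (min_le_right _ _)
    have d2' : δ ≤ e2' := le_trans (min_le_right _ _) (min_le_left _ _)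
    have d4' : δ ≤ e4' := le_trans (min_le_right _ _) (min_le_right _ _)
    refine ⟨δ / 2, by positivity, fun y hy => ?_⟩
    rw [abs_le] at hy
    obtain ⟨hy1, hy2⟩ := hy
    rcases lt_trichotomy y x with hlt | heqx | hgt
    · -- left side: dp at y equals dm at x for both g and g'
      have haffg : ∀ z, (x - e2') ≤ z → z ≤ x →
          ev g hg z = ev g hg (x - e2') + (dm g hg x : ℝ) * (z - (x - e2')) := by
        intro z hz1 hz2
        have hA := H2' z hz1 hz2
        have hB := H2' (x - e2') (by linarith) (by linarith)
        rw [hA, hB]; ring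
      have haffg' : ∀ z, (x - e4') ≤ z → z ≤ x →
          ev g' hg' z = ev g' hg' (x - e4') + (dm g' hg' x : ℝ) * (z - (x - e4')) := by
        intro z hz1 hz2
        have hA := H4' z hz1 hz2
        have hB := H4' (x - e4') (by linarith) (by linarith)
        rw [hA, hB]; ring
      have hq1 : (dp g hg y : ℝ) = (dm g hg x : ℝ) :=
        dp_eq_of_affine g hg haffg y (by linarith) hlt
      have hq2 : (dp g' hg' y : ℝ) = (dm g' hg' x : ℝ) :=
        dp_eq_of_affine g' hg' haffg' y (by linarith) hlt
      have hJx := hJ x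
      have R2 := slope_rel_dm f g f' g' hf hg hf' hg' hreal x
      push_cast
      rw [hq1, hq2]
      have hzz : dm g' hg' x - dm g hg x = dp g' hg' x - dp g hg x := by omega
      have hzz' : (dm g' hg' x : ℝ) - (dm g hg x : ℝ)
          = (dp g' hg' x : ℝ) - (dp g hg x : ℝ) := by exact_mod_cast hzz
      linarith
    · rw [heqx]
    · -- right side: dp at y equals dp at x for both
      have haffg : ∀ z, x ≤ z → z ≤ x + e2 →
          ev g hg z = ev g hg x + (dp g hg x : ℝ) * (z - x) := fun z hz1 hz2 => H2 z hz1 hz2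
      have haffg' : ∀ z, x ≤ z → z ≤ x + e4 →
          ev g' hg' z = ev g' hg' x + (dp g' hg' x : ℝ) * (z - x) := fun z hz1 hz2 => H4 z hz1 hz2
      have hq1 : (dp g hg y : ℝ) = (dp g hg x : ℝ) :=
        dp_eq_of_affine g hg haffg y (le_of_lt hgt) (by linarith)
      have hq2 : (dp g' hg' y : ℝ) = (dp g' hg' x : ℝ) :=
        dp_eq_of_affine g' hg' haffg' y (le_of_lt hgt) (by linarith)
      push_cast
      rw [hq1, hq2]
  have hconst := locally_const hloc
  have hΔ : ∀ x : ℝ, dp g' hg' x - dp g hg x = k := by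
    intro x
    have := hconst x
    exact_mod_cast this
  have hΔm : ∀ x : ℝ, dm g' hg' x - dm g hg x = k := by
    intro x
    have h1 := hJ x
    have h2 := hΔ x
    omega
  -- the affine difference function
  have hloc2 : ∀ x : ℝ, ∃ ε > 0, ∀ y, |y - x| ≤ ε →
      (ev g' hg' y - ev g hg y - (k : ℝ) * y) = (ev g' hg' x - ev g hg x - (k : ℝ) * x) := by
    intro x
    obtain ⟨e2, he2, H2⟩ := right_affine g hg x
    obtain ⟨e4, he4, H4⟩ := right_affine g' hg' x
    obtain ⟨e2', he2', H2'⟩ := left_affine g hg x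
    obtain ⟨e4', he4', H4'⟩ := left_affine g' hg' x
    set δ := min (min e2 e4) (min e2' e4') with hδ
    have hδpos : 0 < δ := lt_min (lt_min he2 he4) (lt_min he2' he4')
    have d2 : δ ≤ e2 := le_trans (min_le_left _ _) (min_le_left _ _)
    have d4 : δ ≤ e4 := le_trans (min_le_left _ _) (min_le_right _ _)
    have d2' : δ ≤ e2' := le_trans (min_le_right _ _) (min_le_left _ _)
    have d4' : δ ≤ e4' := le_trans (min_le_right _ _) (min_le_right _ _)
    refine ⟨δ / 2, by positivity, fun y hy => ?_⟩
    rw [abs_le] at hy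
    obtain ⟨hy1, hy2⟩ := hy
    rcases le_or_gt x y with hxy | hxy
    · have k2 := H2 y hxy (by linarith)
      have k4 := H4 y hxy (by linarith)
      have hdd := hΔ x
      rw [k2, k4]
      have hcast : (dp g' hg' x : ℝ) - (dp g hg x : ℝ) = (k : ℝ) := by exact_mod_cast hdd
      nlinarith [hcast]
    · have k2 := H2' y (by linarith) (le_of_lt hxy)
      have k4 := H4' y (by linarith) (le_of_lt hxy)
      have hdd := hΔm x
      rw [k2, k4]
      have hcast : (dm g' hg' x : ℝ) - (dm g hg x : ℝ) = (k : ℝ) := by exact_mod_cast hdd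
      nlinarith [hcast]
  have hconst2 := locally_const hloc2
  set a : ℝ := ev g' hg' 0 - ev g hg 0 with hadef
  have hG : ∀ x : ℝ, ev g' hg' x = ev g hg x + (a + (k : ℝ) * x) := by
    intro x
    have := hconst2 x
    simp only [mul_zero, sub_zero] at this
    rw [hadef]
    linarith
  have hF : ∀ x : ℝ, ev f' hf' x = ev f hf x + (a + (k : ℝ) * x) := by
    intro x
    have h1 := hreal x
    have h2 := hG x
    linarith
  refine ⟨a, k, ?_, ?_⟩
  · intro x
    rw [eval_eq f' hf', eval_eq f hf, ← EReal.coe_add]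
    exact_mod_cast hF (x 0)
  · intro x
    rw [eval_eq g' hg', eval_eq g hg, ← EReal.coe_add]
    exact_mod_cast hG (x 0)
end

section
/- Let Δ and Δ' be nonempty bounded convex subsets of ℝ², let c > 0 be a real number, and let v ∈ ℝ². Write Δ₀ = {(x, y, 0) : (x, y) ∈ Δ} ⊂ ℝ³, Δ'_c = {(x, y, c) : (x, y) ∈ Δ'} ⊂ ℝ³, and Δ'_c + v = {(x + v₁, y + v₂, c) : (x, y) ∈ Δ'}. Then the three-dimensional Lebesgue measure of the convex hull of Δ₀ ∪ Δ'_c equals the three-dimensional Lebesgue measure of the convex hull of Δ₀ ∪ (Δ'_c + v). -/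
open MeasureTheory


/-- Shear map on ℝ³: `(x,y,z) ↦ (x + a z, y + b z, z)`. -/
noncomputable def shear (a b : ℝ) : (ℝ × ℝ × ℝ) →ₗ[ℝ] (ℝ × ℝ × ℝ) where
  toFun p := (p.1 + a * p.2.2, p.2.1 + b * p.2.2, p.2.2)
  map_add' p q := by simp [Prod.ext_iff]; constructor <;> ring
  map_smul' r p := by simp [Prod.ext_iff]; constructor <;> ring

noncomputable def basis3 : Module.Basis (Fin 3) ℝ (ℝ × ℝ × ℝ) :=
  Module.Basis.ofEquivFun
    { toFun := fun p => ![p.1, p.2.1, p.2.2]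
      invFun := fun f => (f 0, f 1, f 2)
      map_add' := fun p q => by
        funext i; fin_cases i <;> simp
      map_smul' := fun r p => by
        funext i; fin_cases i <;> simp
      left_inv := fun p => rfl
      right_inv := fun f => by
        funext i; fin_cases i <;> simp }

theorem shear_det (a b : ℝ) : LinearMap.det (shear a b) = 1 := by
  rw [← LinearMap.det_toMatrix basis3]
  rw [Matrix.det_fin_three]
  have hr : ∀ p i, basis3.repr p i = ![p.1, p.2.1, p.2.2] i := fun _ _ => rfl
  have hb : ∀ i, basis3 i = ((Pi.single i (1:ℝ) : Fin 3 → ℝ) 0, (Pi.single i (1:ℝ) : Fin 3 → ℝ) 1, (Pi.single i (1:ℝ) : Fin 3 → ℝ) 2) := by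
    intro i; simp [basis3, Module.Basis.coe_ofEquivFun]; rfl
  simp [LinearMap.toMatrix_apply, hr, hb, shear, Pi.single_apply]

instance : (volume : Measure (ℝ × ℝ × ℝ)).IsAddHaarMeasure := by
  have : (volume : Measure (ℝ × ℝ × ℝ)) = (volume : Measure ℝ).prod (volume : Measure (ℝ × ℝ)) :=
    rfl
  rw [this]; infer_instance

/-- **Translating the top face of a prismatoid horizontally does not change its volume.**
For nonempty bounded convex sets `Δ, Δ' ⊂ ℝ²`, `c > 0` and `v ∈ ℝ²`, the volume of
`conv(Δ × {0} ∪ Δ' × {c})` equals the volume of `conv(Δ × {0} ∪ (Δ' + v) × {c})`. -/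
theorem volume_convexHull_translate_top (Δ Δ' : Set (ℝ × ℝ))
    (hΔconv : Convex ℝ Δ) (hΔ'conv : Convex ℝ Δ')
    (hΔbdd : Bornology.IsBounded Δ) (hΔ'bdd : Bornology.IsBounded Δ')
    (hΔne : Δ.Nonempty) (hΔ'ne : Δ'.Nonempty)
    (c : ℝ) (hc : 0 < c) (v : ℝ × ℝ) :
    volume (convexHull ℝ
      ((fun p : ℝ × ℝ => (p.1, p.2, (0 : ℝ))) '' Δ ∪
       (fun p : ℝ × ℝ => (p.1, p.2, c)) '' Δ')) =
    volume (convexHull ℝ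
      ((fun p : ℝ × ℝ => (p.1, p.2, (0 : ℝ))) '' Δ ∪
       (fun p : ℝ × ℝ => (p.1 + v.1, p.2 + v.2, c)) '' Δ')) := by
  set a := v.1 / c with ha
  set b := v.2 / c with hb
  have himg : (⇑(shear a b)) ''
      ((fun p : ℝ × ℝ => (p.1, p.2, (0 : ℝ))) '' Δ ∪
       (fun p : ℝ × ℝ => (p.1, p.2, c)) '' Δ') =
      ((fun p : ℝ × ℝ => (p.1, p.2, (0 : ℝ))) '' Δ ∪
       (fun p : ℝ × ℝ => (p.1 + v.1, p.2 + v.2, c)) '' Δ') := by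
    rw [Set.image_union, ← Set.image_comp, ← Set.image_comp]
    congr 1
    · apply Set.image_congr'
      intro p
      simp [shear]
    · apply Set.image_congr'
      intro p
      simp [shear, ha, hb, div_mul_cancel₀, hc.ne']
  have hhull : convexHull ℝ
      ((fun p : ℝ × ℝ => (p.1, p.2, (0 : ℝ))) '' Δ ∪
       (fun p : ℝ × ℝ => (p.1 + v.1, p.2 + v.2, c)) '' Δ') =
      ⇑(shear a b) '' convexHull ℝ
      ((fun p : ℝ × ℝ => (p.1, p.2, (0 : ℝ))) '' Δ ∪
       (fun p : ℝ × ℝ => (p.1, p.2, c)) '' Δ') := by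
    rw [LinearMap.image_convexHull, himg]
  rw [hhull, Measure.addHaar_image_linearMap, shear_det]
  simp
end
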